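/- arXiv:1401.7956 — 5 statements merged into one kernel-verified Lean document; each statement's English description precedes it below -/
import Mathlib

section
/- Let K be a finite simplicial complex in ℝⁿ with underlying polyhedron X. Then there exist ε > 0 and λ ≥ 1 such that any two points x, y ∈ X with |x − y| < ε can be joined by a Lipschitz curve inside X: there is γ : [0,1] → ℝⁿ with γ([0,1]) ⊆ X, γ(0) = x, γ(1) = y, and γ Lipschitz with constant at most λ|x − y| (so in particular of length at most λ|x − y|). -/
open Metric Set

namespace SCQAux

set_option linter.unusedSectionVars false
set_option maxHeartbeats 1000000

variable {E : Type*} [NormedAddCommGroup E] [NormedSpace ℝ E] [FiniteDimensional ℝ E]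

/-- The convex cone generated by a finite set, as a set. -/
def coneSpan (G : Finset E) : Set E :=
  {x | ∃ c : E → ℝ, (∀ g ∈ G, 0 ≤ c g) ∧ ∑ g ∈ G, c g • g = x}

lemma mem_coneSpan_of_mem {G : Finset E} {g : E} (hg : g ∈ G) : g ∈ coneSpan G := by
  classical
  refine ⟨fun x => if x = g then 1 else 0, fun x _ => by by_cases h : x = g <;> simp [h], ?_⟩
  have h1 : ∀ x ∈ G, (if x = g then (1:ℝ) else 0) • x = if x = g then x else 0 := by
    intro x _; split <;> simp
  rw [Finset.sum_congr rfl h1, Finset.sum_ite_eq' G g (fun x => x), if_pos hg]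

lemma zero_mem_coneSpan (G : Finset E) : (0:E) ∈ coneSpan G :=
  ⟨fun _ => 0, fun _ _ => le_rfl, by simp⟩

lemma smul_mem_coneSpan {G : Finset E} {x : E} {r : ℝ} (hr : 0 ≤ r) (hx : x ∈ coneSpan G) :
    r • x ∈ coneSpan G := by
  obtain ⟨c, hc, hsum⟩ := hx
  refine ⟨fun y => r * c y, fun g hg => mul_nonneg hr (hc g hg), ?_⟩
  rw [← hsum, Finset.smul_sum]
  exact Finset.sum_congr rfl fun g _ => (smul_smul r (c g) g).symm

lemma coneSpan_convex (G : Finset E) : Convex ℝ (coneSpan G) := by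
  intro x hx y hy a b ha hb _
  obtain ⟨c, hc, hcs⟩ := hx
  obtain ⟨d, hd, hds⟩ := hy
  refine ⟨fun g => a * c g + b * d g, fun g hg =>
    add_nonneg (mul_nonneg ha (hc g hg)) (mul_nonneg hb (hd g hg)), ?_⟩
  simp only [add_smul, mul_smul, Finset.sum_add_distrib, ← Finset.smul_sum, hcs, hds]

lemma coneSpan_mono {J G : Finset E} (h : J ⊆ G) : coneSpan J ⊆ coneSpan G := by
  classical
  rintro x ⟨c, hc, hsum⟩
  refine ⟨fun y => if y ∈ J then c y else 0,
    fun g _ => by by_cases hgJ : g ∈ J <;> simp [hgJ, hc g, hgJ] <;> exact hc g hgJ, ?_⟩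
  rw [← Finset.sum_subset h (fun y _ hy => by simp [hy])]
  rw [← hsum]
  exact Finset.sum_congr rfl fun y hy => by simp [hy]

/-- Carathéodory for finitely generated cones. -/
lemma coneSpan_caratheodory :
    ∀ (n : ℕ) (G : Finset E), G.card ≤ n → ∀ x ∈ coneSpan G,
      ∃ J, J ⊆ G ∧ LinearIndependent ℝ (fun j : {y // y ∈ J} => (j : E)) ∧ x ∈ coneSpan J := by
  classical
  intro n
  induction n with
  | zero =>
    intro G hG x hx
    have hGe : G = ∅ := Finset.card_eq_zero.mp (Nat.le_zero.mp hG)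
    subst hGe
    have : IsEmpty {y : E // y ∈ (∅ : Finset E)} :=
      ⟨fun y => absurd y.2 (Finset.notMem_empty _)⟩
    exact ⟨∅, Finset.Subset.refl _, linearIndependent_empty_type, hx⟩
  | succ n ih =>
    intro G hG x hx
    by_cases hLI : LinearIndependent ℝ (fun j : {y // y ∈ G} => (j : E))
    · exact ⟨G, Finset.Subset.refl _, hLI, hx⟩
    · obtain ⟨g, hgsum, i, hgi⟩ := Fintype.not_linearIndependent_iff.mp hLI
      obtain ⟨c, hc, hcs⟩ := hx
      set d0 : E → ℝ := fun y => if h : y ∈ G then g ⟨y, h⟩ else 0 with hd0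
      have hd0sum : ∑ y ∈ G, d0 y • y = 0 := by
        rw [← hgsum, ← Finset.sum_coe_sort G (fun y => d0 y • y)]
        exact Finset.sum_congr rfl fun j _ => by simp [hd0, j.2]
      have hd0ne : d0 i ≠ 0 := by simp [hd0, i.2, hgi]
      obtain ⟨d, hdsum, hdpos⟩ :
          ∃ d : E → ℝ, (∑ y ∈ G, d y • y = 0) ∧ ∃ y ∈ G, 0 < d y := by
        rcases lt_or_gt_of_ne hd0ne with hneg | hpos
        · exact ⟨fun y => - d0 y,
            by simp only [neg_smul, Finset.sum_neg_distrib, hd0sum, neg_zero],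
            ⟨i, i.2, neg_pos.mpr hneg⟩⟩
        · exact ⟨d0, hd0sum, ⟨i, i.2, hpos⟩⟩
      set T := G.filter (fun y => 0 < d y) with hT
      have hTne : T.Nonempty :=
        ⟨hdpos.choose, Finset.mem_filter.mpr ⟨hdpos.choose_spec.1, hdpos.choose_spec.2⟩⟩
      obtain ⟨y₀, hy₀T, hy₀min⟩ := Finset.exists_mem_eq_inf' hTne (fun y => c y / d y)
      have hy₀G : y₀ ∈ G := (Finset.mem_filter.mp hy₀T).1
      have hy₀d : 0 < d y₀ := (Finset.mem_filter.mp hy₀T).2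
      have htnonneg : 0 ≤ c y₀ / d y₀ := div_nonneg (hc y₀ hy₀G) hy₀d.le
      have hmin : ∀ y ∈ T, c y₀ / d y₀ ≤ c y / d y := by
        intro y hy
        calc c y₀ / d y₀ = T.inf' hTne (fun y => c y / d y) := hy₀min.symm
        _ ≤ c y / d y := Finset.inf'_le _ hy
      set c' : E → ℝ := fun y => c y - (c y₀ / d y₀) * d y with hc'
      have hc'nonneg : ∀ y ∈ G, 0 ≤ c' y := by
        intro y hyG
        rcases le_or_gt (d y) 0 with hdy | hdy
        · have h1 := hc y hyG
          simp only [hc']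
          nlinarith
        · have hyT : y ∈ T := Finset.mem_filter.mpr ⟨hyG, hdy⟩
          have h2 : (c y₀ / d y₀) * d y ≤ c y := by
            have := hmin y hyT
            rw [le_div_iff₀ hdy] at this
            linarith
          simp only [hc']; linarith
      have h3 : ∑ y ∈ G, ((c y₀ / d y₀) * d y) • y = (c y₀ / d y₀) • ∑ y ∈ G, d y • y := by
        rw [Finset.smul_sum]
        exact Finset.sum_congr rfl fun y _ => (smul_smul _ (d y) y).symm
      have hc'sum : ∑ y ∈ G, c' y • y = x := by
        simp only [hc', sub_smul, Finset.sum_sub_distrib]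
        rw [h3, hdsum, smul_zero, sub_zero, hcs]
      have hc'y₀ : c' y₀ = 0 := by
        simp only [hc']
        rw [div_mul_cancel₀ _ hy₀d.ne']
        ring
      have hxe : x ∈ coneSpan (G.erase y₀) := by
        refine ⟨c', fun y hy => hc'nonneg y (Finset.mem_of_mem_erase hy), ?_⟩
        rw [← hc'sum, ← Finset.add_sum_erase G _ hy₀G, hc'y₀, zero_smul, zero_add]
      have hcard : (G.erase y₀).card ≤ n := by
        have := Finset.card_erase_of_mem hy₀G
        omega
      obtain ⟨J, hJ, hJLI, hxJ⟩ := ih (G.erase y₀) hcard x hxe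
      exact ⟨J, hJ.trans (Finset.erase_subset _ _), hJLI, hxJ⟩


noncomputable def combo (J : Finset E) : ({x // x ∈ J} → ℝ) →ₗ[ℝ] E where
  toFun c := ∑ j : {x // x ∈ J}, c j • (j : E)
  map_add' a b := by simp [add_smul, Finset.sum_add_distrib]
  map_smul' r a := by simp [Finset.smul_sum, smul_smul]

lemma isClosed_coneSpan_of_li {J : Finset E}
    (hJ : LinearIndependent ℝ (fun j : {x // x ∈ J} => (j : E))) :
    IsClosed (coneSpan J) := by
  classical
  have hker : LinearMap.ker (combo J) = ⊥ := by
    rw [LinearMap.ker_eq_bot']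
    intro c hc
    have hc' : ∑ j : {x // x ∈ J}, c j • (j : E) = 0 := hc
    funext j
    exact Fintype.linearIndependent_iff.mp hJ c hc' j
  have himg : coneSpan J = (combo J) '' {c | ∀ j, 0 ≤ c j} := by
    ext x
    constructor
    · rintro ⟨c, hc, hsum⟩
      refine ⟨fun j => c j, fun j => hc j j.2, ?_⟩
      show ∑ j : {x // x ∈ J}, c (j : E) • (j : E) = x
      rw [Finset.sum_coe_sort J (fun g => c g • g)]
      exact hsum
    · rintro ⟨c, hcpos, rfl⟩
      refine ⟨fun y => if h : y ∈ J then c ⟨y, h⟩ else 0,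
        fun g hg => by simpa [hg] using hcpos ⟨g, hg⟩, ?_⟩
      show ∑ g ∈ J, (if h : g ∈ J then c ⟨g, h⟩ else 0) • g = ∑ j : {x // x ∈ J}, c j • (j : E)
      rw [← Finset.sum_coe_sort J (fun g => (if h : g ∈ J then c ⟨g, h⟩ else 0) • g)]
      exact Finset.sum_congr rfl fun j _ => by simp [j.2]
  have hcl : IsClosed {c : {x // x ∈ J} → ℝ | ∀ j, 0 ≤ c j} := by
    have h2 : {c : {x // x ∈ J} → ℝ | ∀ j, 0 ≤ c j} = ⋂ j, {c | 0 ≤ c j} := by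
      ext; simp [Set.mem_iInter]
    rw [h2]
    exact isClosed_iInter fun j => isClosed_le continuous_const (continuous_apply j)
  rw [himg]
  exact (LinearMap.isClosedEmbedding_of_injective hker).isClosedMap _ hcl

lemma isClosed_coneSpan (G : Finset E) : IsClosed (coneSpan G) := by
  classical
  have hrw : coneSpan G = ⋃ J ∈ G.powerset,
      (if LinearIndependent ℝ (fun j : {x // x ∈ J} => (j : E)) then coneSpan J else ∅) := by
    ext x
    simp only [Set.mem_iUnion]
    constructor
    · intro hx
      obtain ⟨J, hJG, hLI, hxJ⟩ := coneSpan_caratheodory G.card G le_rfl x hx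
      exact ⟨J, Finset.mem_powerset.mpr hJG, by rw [if_pos hLI]; exact hxJ⟩
    · rintro ⟨J, hJ, hxJ⟩
      by_cases hLI : LinearIndependent ℝ (fun j : {x // x ∈ J} => (j : E))
      · rw [if_pos hLI] at hxJ
        exact coneSpan_mono (Finset.mem_powerset.mp hJ) hxJ
      · rw [if_neg hLI] at hxJ
        exact absurd hxJ (Set.notMem_empty x)
  rw [hrw]
  refine (G.powerset : Finset _).finite_toSet.isClosed_biUnion fun J _ => ?_
  by_cases hLI : LinearIndependent ℝ (fun j : {x // x ∈ J} => (j : E))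
  · rw [if_pos hLI]; exact isClosed_coneSpan_of_li hLI
  · rw [if_neg hLI]; exact isClosed_empty


lemma exists_separating_functional
    {s t : Finset E} {p v : E}
    (hindep : AffineIndependent ℝ (fun u : {x : E // x ∈ s} => (u : E)))
    (hsub : convexHull ℝ (s : Set E) ∩ convexHull ℝ (t : Set E) ⊆
      convexHull ℝ ((s : Set E) ∩ (t : Set E)))
    (hps : p ∈ s) (hpt : p ∈ t) (hvs : v ∈ s) (hvt : v ∉ t) :
    ∃ f : E →L[ℝ] ℝ, (∀ u ∈ s, f u ≤ f p) ∧ (∀ w ∈ t, f p ≤ f w) ∧ f v < f p := by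
  classical
  set A : Finset E := s.image (fun u => u - p) with hA
  set B : Finset E := t.image (fun w => p - w) with hB
  set G : Finset E := A ∪ B with hG
  -- the key: p - v is not in the cone generated by G
  have hnm : p - v ∉ coneSpan G := by
    intro hmem
    obtain ⟨c, hcpos, hcsum⟩ := hmem
    -- split the sum
    have hsplit : (∑ g ∈ G \ A, c g • g) + (∑ g ∈ A, c g • g) = p - v := by
      rw [Finset.sum_sdiff (Finset.subset_union_left), hcsum]
    set α : E → ℝ := fun u => c (u - p) with hα
    have hαpos : ∀ u ∈ s, 0 ≤ α u := fun u hu =>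
      hcpos _ (Finset.mem_union_left _ (Finset.mem_image_of_mem _ hu))
    have hainj : ∀ x ∈ s, ∀ y ∈ s, x - p = y - p → x = y := fun x _ y _ h => by
      have := sub_left_injective (G := E) h; exact this
    have hbinj : ∀ x ∈ t, ∀ y ∈ t, p - x = p - y → x = y := fun x _ y _ h => by
      have := sub_right_injective (G := E) h; exact this
    have ha : ∑ g ∈ A, c g • g = ∑ u ∈ s, α u • (u - p) := by
      rw [hA, Finset.sum_image hainj]
    set β : E → ℝ := fun w => if (p - w) ∈ G \ A then c (p - w) else 0 with hβ
    have hβpos : ∀ w ∈ t, 0 ≤ β w := by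
      intro w hw
      rw [hβ]
      dsimp only
      split
      · rename_i h; exact hcpos _ (Finset.mem_sdiff.mp h).1
      · exact le_rfl
    have hGAB : G \ A ⊆ B := by
      intro g hg
      obtain ⟨hgG, hgA⟩ := Finset.mem_sdiff.mp hg
      rcases Finset.mem_union.mp hgG with h | h
      · exact absurd h hgA
      · exact h
    have hb : ∑ g ∈ G \ A, c g • g = ∑ w ∈ t, β w • (p - w) := by
      have h1 : ∑ w ∈ t, β w • (p - w)
          = ∑ g ∈ B, (if g ∈ G \ A then c g else 0) • g := by
        rw [hB, Finset.sum_image hbinj]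
      have h2 : ∑ g ∈ B, (if g ∈ G \ A then c g else 0) • g
          = ∑ g ∈ G \ A, (if g ∈ G \ A then c g else 0) • g := by
        symm
        apply Finset.sum_subset hGAB
        intro g _ hg
        rw [if_neg hg, zero_smul]
      rw [h1, h2]
      exact (Finset.sum_congr rfl fun g hg => by rw [if_pos hg]).symm
    set α' : E → ℝ := fun u => α u + (if u = v then 1 else 0) with hα'
    set z : E := ∑ u ∈ s, α' u • (u - p) with hz
    have hz_s : z = (v - p) + ∑ u ∈ s, α u • (u - p) := by
      rw [hz]
      simp only [hα', add_smul, Finset.sum_add_distrib]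
      rw [show ∑ u ∈ s, (if u = v then (1:ℝ) else 0) • (u - p) = v - p by
        rw [Finset.sum_congr rfl (fun u _ => show (if u = v then (1:ℝ) else 0) • (u - p)
            = if u = v then v - p else 0 by split <;> simp_all),
          Finset.sum_ite_eq' s v (fun _ => v - p), if_pos hvs]]
      abel
    have hz_t : z = ∑ w ∈ t, β w • (w - p) := by
      have hb' : ∑ w ∈ t, β w • (w - p) = - ∑ w ∈ t, β w • (p - w) := by
        rw [← Finset.sum_neg_distrib]
        exact Finset.sum_congr rfl fun w _ => by rw [← smul_neg, neg_sub]
      rw [hb', ← hb, hz_s, ← ha]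
      have := hsplit
      have h1 : ∑ g ∈ G \ A, c g • g = (p - v) - ∑ g ∈ A, c g • g := by
        rw [← this]; abel
      rw [h1]
      abel
    -- scale into the hulls
    set As : ℝ := ∑ u ∈ s, α' u with hAs
    set Bs : ℝ := ∑ w ∈ t, β w with hBs
    have hAspos : 0 ≤ As := Finset.sum_nonneg fun u hu => by
      simp only [hα']
      have := hαpos u hu
      split <;> linarith
    have hBspos : 0 ≤ Bs := Finset.sum_nonneg hβpos
    set M : ℝ := max As (max Bs 1) with hM
    have hM1 : (1:ℝ) ≤ M := le_max_of_le_right (le_max_right _ _)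
    have hMpos : 0 < M := lt_of_lt_of_le one_pos hM1
    set ε : ℝ := M⁻¹ with hε
    have hεpos : 0 < ε := inv_pos.mpr hMpos
    have hεA : ε * As ≤ 1 := by
      rw [hε, inv_mul_le_iff₀ hMpos, mul_one]
      exact le_max_left _ _
    have hεB : ε * Bs ≤ 1 := by
      rw [hε, inv_mul_le_iff₀ hMpos, mul_one]
      exact le_max_of_le_right (le_max_left _ _)
    set q : E := p + ε • z with hq
    -- q ∈ hull s
    have hcomb : ∀ (I : Finset E) (δ : E → ℝ), p ∈ I →
        (∑ u ∈ I, (ε * δ u) • (u - p)) + p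
          = ∑ u ∈ I, (ε * δ u + if u = p then 1 - ε * (∑ w ∈ I, δ w) else 0) • u := by
      intro I δ hpI
      simp only [add_smul, Finset.sum_add_distrib, smul_sub, Finset.sum_sub_distrib]
      rw [show ∑ u ∈ I, (if u = p then 1 - ε * (∑ w ∈ I, δ w) else (0:ℝ)) • u
          = (1 - ε * ∑ w ∈ I, δ w) • p by
        rw [Finset.sum_congr rfl (fun u _ => show (if u = p then 1 - ε * (∑ w ∈ I, δ w) else (0:ℝ)) • u
            = if u = p then (1 - ε * ∑ w ∈ I, δ w) • p else 0 by split <;> simp_all),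
          Finset.sum_ite_eq' I p _, if_pos hpI]]
      rw [show ∑ u ∈ I, (ε * δ u) • p = (ε * ∑ w ∈ I, δ w) • p by
        rw [← Finset.sum_smul, ← Finset.mul_sum]]
      rw [sub_smul, one_smul]
      abel
    have hqs : q ∈ convexHull ℝ (s : Set E) := by
      rw [Finset.convexHull_eq]
      refine ⟨fun u => ε * α' u + (if u = p then 1 - ε * As else 0), ?_, ?_, ?_⟩
      · intro u hu
        have h1 : 0 ≤ ε * α' u := mul_nonneg hεpos.le (by
          simp only [hα']; have := hαpos u hu; split <;> linarith)
        have h2 : (0:ℝ) ≤ if u = p then 1 - ε * As else 0 := by split <;> linarith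
        dsimp only
        linarith
      · rw [Finset.sum_add_distrib, ← Finset.mul_sum, ← hAs,
          Finset.sum_ite_eq' s p _, if_pos hps]
        ring
      · rw [Finset.centerMass_eq_of_sum_1]
        · simp only [id]
          rw [← hcomb s α' hps, hq]
          have : ε • z = ∑ u ∈ s, (ε * α' u) • (u - p) := by
            rw [hz, Finset.smul_sum]
            exact Finset.sum_congr rfl fun u _ => (smul_smul ε (α' u) (u - p))
          rw [this]; abel
        · rw [Finset.sum_add_distrib, ← Finset.mul_sum, ← hAs,
            Finset.sum_ite_eq' s p _, if_pos hps]
          ring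
    have hqt : q ∈ convexHull ℝ (t : Set E) := by
      rw [Finset.convexHull_eq]
      refine ⟨fun w => ε * β w + (if w = p then 1 - ε * Bs else 0), ?_, ?_, ?_⟩
      · intro w hw
        have h1 : 0 ≤ ε * β w := mul_nonneg hεpos.le (hβpos w hw)
        have h2 : (0:ℝ) ≤ if w = p then 1 - ε * Bs else 0 := by split <;> linarith
        dsimp only
        linarith
      · rw [Finset.sum_add_distrib, ← Finset.mul_sum, ← hBs,
          Finset.sum_ite_eq' t p _, if_pos hpt]
        ring
      · rw [Finset.centerMass_eq_of_sum_1]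
        · simp only [id]
          rw [← hcomb t β hpt, hq]
          have : ε • z = ∑ w ∈ t, (ε * β w) • (w - p) := by
            rw [hz_t, Finset.smul_sum]
            exact Finset.sum_congr rfl fun w _ => (smul_smul ε (β w) (w - p))
          rw [this]; abel
        · rw [Finset.sum_add_distrib, ← Finset.mul_sum, ← hBs,
            Finset.sum_ite_eq' t p _, if_pos hpt]
          ring
    -- hence q ∈ hull (s ∩ t)
    have hqst : q ∈ convexHull ℝ ((s ∩ t : Finset E) : Set E) := by
      rw [Finset.coe_inter]
      exact hsub ⟨hqs, hqt⟩
    rw [Finset.convexHull_eq] at hqst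
    obtain ⟨γ, hγpos, hγsum, hγmass⟩ := hqst
    rw [Finset.centerMass_eq_of_sum_1 _ _ hγsum] at hγmass
    simp only [id] at hγmass
    -- ∑_{u ∈ s∩t} γ u • (u - p) = ε • z
    have hγz : ∑ u ∈ s ∩ t, γ u • (u - p) = ε • z := by
      have : ∑ u ∈ s ∩ t, γ u • (u - p)
          = (∑ u ∈ s ∩ t, γ u • u) - (∑ u ∈ s ∩ t, γ u) • p := by
        simp only [smul_sub, Finset.sum_sub_distrib, Finset.sum_smul]
      rw [this, hγmass, hγsum, one_smul, hq]
      abel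
    -- extend to s and use affine independence
    set γt : E → ℝ := fun u => if u ∈ t then γ u else 0 with hγt
    have hγext : ∑ u ∈ s, γt u • (u - p) = ∑ u ∈ s ∩ t, γ u • (u - p) := by
      rw [show (s ∩ t : Finset E) = s.filter (· ∈ t) by
        ext u; simp [Finset.mem_filter, Finset.mem_inter]]
      rw [Finset.sum_filter]
      exact Finset.sum_congr rfl fun u _ => by
        by_cases h : u ∈ t <;> simp [hγt, h]
    set dcoef : E → ℝ := fun u => ε * α' u - γt u with hd
    have hdsum0 : ∑ u ∈ s, dcoef u • (u - p) = 0 := by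
      simp only [hd, sub_smul, Finset.sum_sub_distrib]
      rw [hγext, hγz]
      rw [show ∑ u ∈ s, (ε * α' u) • (u - p) = ε • z by
        rw [hz, Finset.smul_sum]
        exact (Finset.sum_congr rfl fun u _ => (smul_smul ε (α' u) (u - p))).symm]
      abel
    set D : ℝ := ∑ u ∈ s, dcoef u with hD
    set i0 : {x // x ∈ s} := ⟨p, hps⟩ with hi0
    set w : {x // x ∈ s} → ℝ := fun u => dcoef u - (if u = i0 then D else 0) with hw
    have hwsum : ∑ u ∈ s.attach, w u = 0 := by
      have h1 : ∀ u ∈ s.attach, w u = dcoef (u:E) - (if u = i0 then D else 0) :=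
        fun u _ => by rw [hw]
      rw [Finset.sum_congr rfl h1, Finset.sum_sub_distrib,
        Finset.sum_ite_eq' s.attach i0 (fun _ => D), if_pos (Finset.mem_attach _ _),
        Finset.sum_attach s dcoef, ← hD, sub_self]
    have hvsub : s.attach.weightedVSub (fun u : {x // x ∈ s} => (u : E)) w = 0 := by
      rw [Finset.weightedVSub_eq_weightedVSubOfPoint_of_sum_eq_zero _ _ _ hwsum p,
        Finset.weightedVSubOfPoint_apply]
      have h1 : ∀ u ∈ s.attach, w u • ((u:E) -ᵥ p)
          = dcoef (u:E) • ((u:E) - p) - (if u = i0 then D • ((p:E) - p) else 0) := by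
        intro u _
        rw [hw, vsub_eq_sub]
        dsimp only
        rw [sub_smul]
        congr 1
        by_cases h : u = i0
        · simp [h, hi0]
        · rw [if_neg h, if_neg h, zero_smul]
      rw [Finset.sum_congr rfl h1, Finset.sum_sub_distrib,
        Finset.sum_ite_eq' s.attach i0 (fun _ => D • ((p:E) - p)),
        if_pos (Finset.mem_attach _ _),
        Finset.sum_attach s (fun u => dcoef u • (u - p)), hdsum0]
      simp
    have hzero := hindep s.attach w hwsum hvsub ⟨v, hvs⟩ (Finset.mem_attach _ _)
    have hvne : (⟨v, hvs⟩ : {x // x ∈ s}) ≠ i0 := by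
      simp only [hi0, ne_eq, Subtype.mk.injEq]
      intro h; exact hvt (h ▸ hpt)
    rw [hw] at hzero
    simp only [if_neg hvne, sub_zero] at hzero
    have : dcoef v = ε * (α v + 1) := by
      simp [hd, hγt, hvt, hα']
    rw [this] at hzero
    have hαv := hαpos v hvs
    nlinarith
  -- separate
  obtain ⟨f, u0, hfu, hfx⟩ :=
    geometric_hahn_banach_closed_point (coneSpan_convex G) (isClosed_coneSpan G) hnm
  have hu0pos : 0 < u0 := by
    have := hfu 0 (zero_mem_coneSpan G)
    simpa using this
  have hf0 : ∀ b ∈ coneSpan G, f b ≤ 0 := by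
    intro b hb
    by_contra h
    push_neg at h
    set r : ℝ := (u0 + 1) / f b with hr
    have hrpos : 0 ≤ r := div_nonneg (by linarith) h.le
    have := hfu (r • b) (smul_mem_coneSpan hrpos hb)
    rw [map_smul, smul_eq_mul, hr, div_mul_cancel₀ _ h.ne'] at this
    linarith
  refine ⟨f, ?_, ?_, ?_⟩
  · intro u hu
    have := hf0 _ (mem_coneSpan_of_mem
      (Finset.mem_union_left _ (Finset.mem_image_of_mem (fun u => u - p) hu)))
    rw [map_sub] at this
    linarith
  · intro w hw
    have := hf0 _ (mem_coneSpan_of_mem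
      (Finset.mem_union_right _ (Finset.mem_image_of_mem (fun w => p - w) hw)))
    rw [map_sub] at this
    linarith
  · have : f (p - v) > 0 := lt_trans hu0pos hfx
    rw [map_sub] at this
    linarith


lemma sum_inter_sdiff {α M : Type*} [DecidableEq α] [AddCommMonoid M]
    (s t : Finset α) (f : α → M) :
    ∑ u ∈ s ∩ t, f u + ∑ u ∈ s \ t, f u = ∑ u ∈ s, f u := by
  classical
  rw [← Finset.filter_mem_eq_inter, Finset.sdiff_eq_filter]
  exact Finset.sum_filter_add_sum_filter_not s (· ∈ t) f

lemma exists_near_point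
    {s t : Finset E}
    (hindep : AffineIndependent ℝ (fun u : {x : E // x ∈ s} => (u : E)))
    (hsub : convexHull ℝ (s : Set E) ∩ convexHull ℝ (t : Set E) ⊆
      convexHull ℝ ((s : Set E) ∩ (t : Set E)))
    (hne : (convexHull ℝ (s : Set E) ∩ convexHull ℝ (t : Set E)).Nonempty) :
    ∃ c : ℝ, 0 ≤ c ∧ ∀ x ∈ convexHull ℝ (s : Set E), ∀ y ∈ convexHull ℝ (t : Set E),
      ∃ x' ∈ convexHull ℝ ((s : Set E) ∩ (t : Set E)), dist x x' ≤ c * dist x y := by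
  classical
  obtain ⟨z, hz⟩ := hne
  have hzst : z ∈ convexHull ℝ ((s ∩ t : Finset E) : Set E) := by
    rw [Finset.coe_inter]; exact hsub hz
  have hstne : (s ∩ t).Nonempty := by
    by_contra h
    rw [Finset.not_nonempty_iff_eq_empty] at h
    rw [h] at hzst
    simp at hzst
  obtain ⟨p, hpst⟩ := hstne
  have hps : p ∈ s := (Finset.mem_inter.mp hpst).1
  have hpt : p ∈ t := (Finset.mem_inter.mp hpst).2
  have hsep : ∀ v : E, v ∈ s \ t → ∃ f : E →L[ℝ] ℝ,
      (∀ u ∈ s, f u ≤ f p) ∧ (∀ w ∈ t, f p ≤ f w) ∧ f v < f p := fun v hv =>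
    exists_separating_functional hindep hsub hps hpt
      (Finset.mem_sdiff.mp hv).1 (Finset.mem_sdiff.mp hv).2
  choose! F hF1 hF2 hF3 using hsep
  set cv : E → ℝ := fun v => (‖F v‖ / (F v p - F v v)) * ‖v - p‖ with hcv
  have hcvpos : ∀ v ∈ s \ t, 0 ≤ cv v := by
    intro v hv
    have := hF3 v hv
    exact mul_nonneg (div_nonneg (norm_nonneg _) (by linarith)) (norm_nonneg _)
  refine ⟨∑ v ∈ s \ t, cv v, Finset.sum_nonneg hcvpos, ?_⟩
  intro x hx y hy
  rw [Finset.convexHull_eq] at hx hy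
  obtain ⟨wx, hwx0, hwx1, hwxm⟩ := hx
  obtain ⟨wy, hwy0, hwy1, hwym⟩ := hy
  rw [Finset.centerMass_eq_of_sum_1 _ _ hwx1] at hwxm
  rw [Finset.centerMass_eq_of_sum_1 _ _ hwy1] at hwym
  simp only [id] at hwxm hwym
  have hwv : ∀ v ∈ s \ t, wx v ≤ (‖F v‖ / (F v p - F v v)) * dist x y := by
    intro v hv
    have hvs : v ∈ s := (Finset.mem_sdiff.mp hv).1
    have hpos : 0 < F v p - F v v := by have := hF3 v hv; linarith
    have hfx : (F v) x = ∑ u ∈ s, wx u * F v u := by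
      rw [← hwxm, map_sum]
      exact Finset.sum_congr rfl fun u _ => by rw [map_smul, smul_eq_mul]
    have hfy : (F v) y = ∑ u ∈ t, wy u * F v u := by
      rw [← hwym, map_sum]
      exact Finset.sum_congr rfl fun u _ => by rw [map_smul, smul_eq_mul]
    have h1 : wx v * (F v p - F v v) ≤ ∑ u ∈ s, wx u * (F v p - F v u) := by
      refine Finset.single_le_sum (f := fun u => wx u * (F v p - F v u)) ?_ hvs
      intro u hu
      exact mul_nonneg (hwx0 u hu) (by linarith [hF1 v hv u hu])
    have h2 : ∑ u ∈ s, wx u * (F v p - F v u) = F v p - F v x := by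
      have h2a : ∑ u ∈ s, wx u * (F v p - F v u)
          = (∑ u ∈ s, wx u) * F v p - ∑ u ∈ s, wx u * F v u := by
        rw [Finset.sum_mul, ← Finset.sum_sub_distrib]
        exact Finset.sum_congr rfl fun u _ => by ring
      rw [h2a, hwx1, one_mul, hfx]
    have h3 : F v p ≤ F v y := by
      rw [hfy]
      calc F v p = ∑ u ∈ t, wy u * F v p := by rw [← Finset.sum_mul, hwy1, one_mul]
      _ ≤ ∑ u ∈ t, wy u * F v u :=
        Finset.sum_le_sum fun u hu => mul_le_mul_of_nonneg_left (hF2 v hv u hu) (hwy0 u hu)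
    have h4 : F v y - F v x ≤ ‖F v‖ * dist x y := by
      have h4a : F v y - F v x = F v (y - x) := by rw [map_sub]
      have h4b : F v (y - x) ≤ |F v (y - x)| := le_abs_self _
      have h4c : |F v (y - x)| ≤ ‖F v‖ * ‖y - x‖ := (F v).le_opNorm (y - x)
      have h4d : ‖y - x‖ = dist x y := by rw [dist_eq_norm, norm_sub_rev]
      rw [h4a]
      calc F v (y - x) ≤ |F v (y - x)| := h4b
      _ ≤ ‖F v‖ * ‖y - x‖ := h4c
      _ = ‖F v‖ * dist x y := by rw [h4d]
    rw [div_mul_eq_mul_div, le_div_iff₀ hpos]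
    calc wx v * (F v p - F v v) ≤ ∑ u ∈ s, wx u * (F v p - F v u) := h1
    _ = F v p - F v x := h2
    _ ≤ F v y - F v x := by linarith
    _ ≤ ‖F v‖ * dist x y := h4
  set m := ∑ v ∈ s \ t, wx v with hm
  have hm0 : 0 ≤ m := Finset.sum_nonneg fun v hv => hwx0 v (Finset.mem_sdiff.mp hv).1
  refine ⟨(∑ u ∈ s ∩ t, wx u • u) + m • p, ?_, ?_⟩
  · rw [← Finset.coe_inter, Finset.convexHull_eq]
    refine ⟨fun u => wx u + (if u = p then m else 0), ?_, ?_, ?_⟩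
    · intro u hu
      have h1 : 0 ≤ wx u := hwx0 u (Finset.mem_inter.mp hu).1
      have h2 : (0:ℝ) ≤ if u = p then m else 0 := by split <;> simp [hm0]
      dsimp only
      linarith
    · rw [Finset.sum_add_distrib, Finset.sum_ite_eq' (s ∩ t) p _, if_pos hpst]
      rw [hm, sum_inter_sdiff s t wx, hwx1]
    · rw [Finset.centerMass_eq_of_sum_1]
      · simp only [id]
        have h1 : ∀ u ∈ s ∩ t, (wx u + if u = p then m else 0) • u
            = wx u • u + (if u = p then m • p else 0) := by
          intro u _
          rw [add_smul]
          congr 1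
          split
          · rename_i h; rw [h]
          · simp
        rw [Finset.sum_congr rfl h1, Finset.sum_add_distrib,
          Finset.sum_ite_eq' (s ∩ t) p _, if_pos hpst]
      · rw [Finset.sum_add_distrib, Finset.sum_ite_eq' (s ∩ t) p _, if_pos hpst]
        rw [hm, sum_inter_sdiff s t wx, hwx1]
  · have hxdiff : x - ((∑ u ∈ s ∩ t, wx u • u) + m • p) = ∑ v ∈ s \ t, wx v • (v - p) := by
      have hpart := sum_inter_sdiff s t (fun u => wx u • u)
      have h5 : ∑ v ∈ s \ t, wx v • (v - p) = (∑ v ∈ s \ t, wx v • v) - m • p := by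
        simp only [smul_sub, Finset.sum_sub_distrib]
        rw [hm, Finset.sum_smul]
      rw [h5, ← hwxm, ← hpart]
      abel
    rw [dist_eq_norm, hxdiff]
    calc ‖∑ v ∈ s \ t, wx v • (v - p)‖ ≤ ∑ v ∈ s \ t, ‖wx v • (v - p)‖ := norm_sum_le _ _
    _ = ∑ v ∈ s \ t, wx v * ‖v - p‖ := by
        exact Finset.sum_congr rfl fun v hv => by
          rw [norm_smul, Real.norm_eq_abs, abs_of_nonneg (hwx0 v (Finset.mem_sdiff.mp hv).1)]
    _ ≤ ∑ v ∈ s \ t, ((‖F v‖ / (F v p - F v v)) * dist x y) * ‖v - p‖ := by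
        refine Finset.sum_le_sum fun v hv => ?_
        exact mul_le_mul_of_nonneg_right (hwv v hv) (norm_nonneg _)
    _ = (∑ v ∈ s \ t, cv v) * dist x y := by
        rw [Finset.sum_mul]
        exact Finset.sum_congr rfl fun v hv => by rw [hcv]; ring

lemma lip_glue {f : ℝ → E} {L a b c : ℝ} (hab : a ≤ b) (hbc : b ≤ c)
    (h1 : ∀ u ∈ Icc a b, ∀ v ∈ Icc a b, dist (f u) (f v) ≤ L * |u - v|)
    (h2 : ∀ u ∈ Icc b c, ∀ v ∈ Icc b c, dist (f u) (f v) ≤ L * |u - v|) :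
    ∀ u ∈ Icc a c, ∀ v ∈ Icc a c, dist (f u) (f v) ≤ L * |u - v| := by
  have key : ∀ u v, u ∈ Icc a c → v ∈ Icc a c → u ≤ v → dist (f u) (f v) ≤ L * |u - v| := by
    intro u v hu hv huv
    rcases le_total v b with h | h
    · exact h1 u ⟨hu.1, le_trans huv h⟩ v ⟨hv.1, h⟩
    · rcases le_total b u with h' | h'
      · exact h2 u ⟨h', hu.2⟩ v ⟨le_trans h' huv, hv.2⟩
      · calc dist (f u) (f v) ≤ dist (f u) (f b) + dist (f b) (f v) := dist_triangle _ _ _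
        _ ≤ L * |u - b| + L * |b - v| :=
          add_le_add (h1 u ⟨hu.1, h'⟩ b ⟨hab, le_rfl⟩) (h2 b ⟨le_rfl, hbc⟩ v ⟨h, hv.2⟩)
        _ = L * (b - u) + L * (v - b) := by
          rw [abs_of_nonpos (by linarith), abs_of_nonpos (by linarith)]
          ring
        _ = L * |u - v| := by
          rw [abs_of_nonpos (by linarith)]
          ring
  intro u hu v hv
  rcases le_total u v with h | h
  · exact key u v hu hv h
  · rw [dist_comm, abs_sub_comm]
    exact key v u hv hu h

lemma three_leg_path {A B : Set E} (hA : Convex ℝ A) (hB : Convex ℝ B)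
    {x x' y' y : E} (hx : x ∈ A) (hx' : x' ∈ A) (hy'A : y' ∈ A) (hy'B : y' ∈ B) (hy : y ∈ B)
    {L : ℝ} (h1 : dist x x' ≤ L) (h2 : dist x' y' ≤ L) (h3 : dist y' y ≤ L) :
    ∃ γ : ℝ → E, γ '' Icc (0:ℝ) 1 ⊆ A ∪ B ∧ γ 0 = x ∧ γ 1 = y ∧
      ∀ u ∈ Icc (0:ℝ) 1, ∀ v ∈ Icc (0:ℝ) 1, dist (γ u) (γ v) ≤ (3 * L) * |u - v| := by
  classical
  have hL : 0 ≤ L := le_trans dist_nonneg h1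
  set σ : E → E → ℝ → E := fun a b θ => a + θ • (b - a) with hσ
  have hσd : ∀ a b θ θ', dist (σ a b θ) (σ a b θ') = |θ - θ'| * ‖b - a‖ := by
    intro a b θ θ'
    rw [dist_eq_norm]
    have hh : σ a b θ - σ a b θ' = (θ - θ') • (b - a) := by
      rw [hσ]; dsimp only; rw [sub_smul]; abel
    rw [hh, norm_smul, Real.norm_eq_abs]
  have hσmem : ∀ (C : Set E) a b, Convex ℝ C → a ∈ C → b ∈ C →
      ∀ θ ∈ Icc (0:ℝ) 1, σ a b θ ∈ C := by
    intro C a b hC ha hb θ hθ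
    have hseg : σ a b θ ∈ segment ℝ a b := by
      rw [segment_eq_image']
      exact ⟨θ, hθ, rfl⟩
    exact hC.segment_subset ha hb hseg
  set γ : ℝ → E := fun θ =>
    if θ ≤ 1/3 then σ x x' (3*θ) else if θ ≤ 2/3 then σ x' y' (3*θ-1) else σ y' y (3*θ-2)
    with hγ
  have e1 : ∀ θ ∈ Icc (0:ℝ) (1/3), γ θ = σ x x' (3*θ) := by
    intro θ hθ
    rw [hγ]; dsimp only; rw [if_pos hθ.2]
  have e2 : ∀ θ ∈ Icc (1/3:ℝ) (2/3), γ θ = σ x' y' (3*θ-1) := by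
    intro θ hθ
    rw [hγ]; dsimp only
    by_cases h : θ ≤ 1/3
    · have hθeq : θ = 1/3 := le_antisymm h hθ.1
      subst hθeq
      rw [if_pos le_rfl, hσ]
      dsimp only
      norm_num
    · rw [if_neg h, if_pos hθ.2]
  have e3 : ∀ θ ∈ Icc (2/3:ℝ) 1, γ θ = σ y' y (3*θ-2) := by
    intro θ hθ
    rw [hγ]; dsimp only
    by_cases h : θ ≤ 1/3
    · exact absurd (le_trans hθ.1 h) (by norm_num)
    · by_cases h2' : θ ≤ 2/3
      · have hθeq : θ = 2/3 := le_antisymm h2' hθ.1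
        subst hθeq
        rw [if_neg h, if_pos le_rfl, hσ]
        dsimp only
        norm_num
      · rw [if_neg h, if_neg h2']
  have lip1 : ∀ u ∈ Icc (0:ℝ) (1/3), ∀ v ∈ Icc (0:ℝ) (1/3),
      dist (γ u) (γ v) ≤ (3*L) * |u - v| := by
    intro u hu v hv
    rw [e1 u hu, e1 v hv, hσd]
    have hn : ‖x' - x‖ = dist x x' := by rw [dist_eq_norm, norm_sub_rev]
    have habs : |3*u - 3*v| = 3 * |u - v| := by
      rw [show 3*u - 3*v = 3*(u-v) by ring, abs_mul]
      norm_num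
    rw [habs, hn]
    calc 3 * |u - v| * dist x x' ≤ 3 * |u - v| * L := by
          exact mul_le_mul_of_nonneg_left h1 (by positivity)
    _ = (3*L) * |u - v| := by ring
  have lip2 : ∀ u ∈ Icc (1/3:ℝ) (2/3), ∀ v ∈ Icc (1/3:ℝ) (2/3),
      dist (γ u) (γ v) ≤ (3*L) * |u - v| := by
    intro u hu v hv
    rw [e2 u hu, e2 v hv, hσd]
    have hn : ‖y' - x'‖ = dist x' y' := by rw [dist_eq_norm, norm_sub_rev]
    have habs : |(3*u-1) - (3*v-1)| = 3 * |u - v| := by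
      rw [show (3*u-1) - (3*v-1) = 3*(u-v) by ring, abs_mul]
      norm_num
    rw [habs, hn]
    calc 3 * |u - v| * dist x' y' ≤ 3 * |u - v| * L := by
          exact mul_le_mul_of_nonneg_left h2 (by positivity)
    _ = (3*L) * |u - v| := by ring
  have lip3 : ∀ u ∈ Icc (2/3:ℝ) 1, ∀ v ∈ Icc (2/3:ℝ) 1,
      dist (γ u) (γ v) ≤ (3*L) * |u - v| := by
    intro u hu v hv
    rw [e3 u hu, e3 v hv, hσd]
    have hn : ‖y - y'‖ = dist y' y := by rw [dist_eq_norm, norm_sub_rev]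
    have habs : |(3*u-2) - (3*v-2)| = 3 * |u - v| := by
      rw [show (3*u-2) - (3*v-2) = 3*(u-v) by ring, abs_mul]
      norm_num
    rw [habs, hn]
    calc 3 * |u - v| * dist y' y ≤ 3 * |u - v| * L := by
          exact mul_le_mul_of_nonneg_left h3 (by positivity)
    _ = (3*L) * |u - v| := by ring
  have lip12 := lip_glue (f := γ) (by norm_num : (0:ℝ) ≤ 1/3) (by norm_num : (1/3:ℝ) ≤ 2/3) lip1 lip2
  have lipAll := lip_glue (f := γ) (by norm_num : (0:ℝ) ≤ 2/3) (by norm_num : (2/3:ℝ) ≤ 1) lip12 lip3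
  refine ⟨γ, ?_, ?_, ?_, lipAll⟩
  · rintro _ ⟨θ, hθ, rfl⟩
    by_cases hc1 : θ ≤ 1/3
    · left
      rw [e1 θ ⟨hθ.1, hc1⟩]
      exact hσmem A x x' hA hx hx' (3*θ) ⟨by nlinarith [hθ.1], by nlinarith⟩
    · by_cases hc2 : θ ≤ 2/3
      · left
        rw [e2 θ ⟨le_of_not_ge hc1, hc2⟩]
        exact hσmem A x' y' hA hx' hy'A (3*θ-1) ⟨by nlinarith [le_of_not_ge hc1], by nlinarith⟩
      · right
        rw [e3 θ ⟨le_of_not_ge hc2, hθ.2⟩]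
        exact hσmem B y' y hB hy'B hy (3*θ-2) ⟨by nlinarith [le_of_not_ge hc2], by nlinarith [hθ.2]⟩
  · rw [e1 0 ⟨le_rfl, by norm_num⟩, hσ]
    dsimp only
    norm_num
  · rw [e3 1 ⟨by norm_num, le_rfl⟩, hσ]
    dsimp only
    norm_num

lemma disjoint_compact_dist {A B : Set E} (hA : IsCompact A) (hB : IsCompact B)
    (hAne : A.Nonempty) (hBne : B.Nonempty) (hdisj : A ∩ B = ∅) :
    ∃ δ > 0, ∀ x ∈ A, ∀ y ∈ B, δ ≤ dist x y := by
  obtain ⟨x₀, hx₀A, hmin⟩ := hA.exists_isMinOn hAne (continuous_infDist_pt B).continuousOn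
  have hx₀B : x₀ ∉ B := fun h => (Set.eq_empty_iff_forall_notMem.mp hdisj x₀) ⟨hx₀A, h⟩
  have hpos : 0 < infDist x₀ B := (hB.isClosed.notMem_iff_infDist_pos hBne).mp hx₀B
  refine ⟨infDist x₀ B, hpos, fun x hx y hy => ?_⟩
  calc infDist x₀ B ≤ infDist x B := hmin hx
  _ ≤ dist x y := infDist_le_dist_of_mem hy

lemma finset_exists_pos_forall {α : Type*} (P : Finset α) (Q : α → ℝ → Prop)
    (hmono : ∀ q a b, 0 < a → a ≤ b → Q q b → Q q a)
    (h : ∀ q ∈ P, ∃ ε, 0 < ε ∧ Q q ε) : ∃ ε, 0 < ε ∧ ∀ q ∈ P, Q q ε := by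
  classical
  induction P using Finset.induction with
  | empty => exact ⟨1, one_pos, fun q hq => absurd hq (Finset.notMem_empty q)⟩
  | insert a P' hnotmem ih =>
    obtain ⟨ε₁, hε₁, h₁⟩ := ih (fun q hq => h q (Finset.mem_insert_of_mem hq))
    obtain ⟨ε₂, hε₂, h₂⟩ := h a (Finset.mem_insert_self a P')
    refine ⟨min ε₁ ε₂, lt_min hε₁ hε₂, fun q hq => ?_⟩
    rcases Finset.mem_insert.mp hq with rfl | hq'
    · exact hmono q _ _ (lt_min hε₁ hε₂) (min_le_right _ _) h₂
    · exact hmono q _ _ (lt_min hε₁ hε₂) (min_le_left _ _) (h₁ q hq')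

lemma finset_exists_ge_forall {α : Type*} (P : Finset α) (Q : α → ℝ → Prop)
    (hmono : ∀ q a b, a ≤ b → Q q a → Q q b)
    (h : ∀ q ∈ P, ∃ M, Q q M) : ∃ M, 1 ≤ M ∧ ∀ q ∈ P, Q q M := by
  classical
  induction P using Finset.induction with
  | empty => exact ⟨1, le_rfl, fun q hq => absurd hq (Finset.notMem_empty q)⟩
  | insert a P' hnotmem ih =>
    obtain ⟨M₁, hM₁, h₁⟩ := ih (fun q hq => h q (Finset.mem_insert_of_mem hq))
    obtain ⟨M₂, h₂⟩ := h a (Finset.mem_insert_self a P')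
    refine ⟨max M₁ M₂, le_trans hM₁ (le_max_left _ _), fun q hq => ?_⟩
    rcases Finset.mem_insert.mp hq with rfl | hq'
    · exact hmono q _ _ (le_max_right _ _) h₂
    · exact hmono q _ _ (le_max_left _ _) (h₁ q hq')


end SCQAux

open SCQAux

set_option maxHeartbeats 1000000 in
/-- Let `K` be a finite simplicial complex in `ℝⁿ` with underlying
polyhedron `X = K.space`. Then there exist `ε > 0` and `λ ≥ 1` such that any two points
`x, y ∈ X` with `|x − y| < ε` can be joined by a curve `γ : [0,1] → X` which is Lipschitz
with constant at most `λ|x − y|` (in particular of length at most `λ|x − y|`). -/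
theorem finite_simplicial_complex_locally_quasiconvex
    (n : ℕ) (K : Geometry.SimplicialComplex ℝ (EuclideanSpace ℝ (Fin n)))
    (hfin : K.faces.Finite) :
    ∃ (ε lam : ℝ), 0 < ε ∧ 1 ≤ lam ∧
      ∀ x ∈ K.space, ∀ y ∈ K.space, dist x y < ε →
        ∃ γ : ℝ → EuclideanSpace ℝ (Fin n),
          γ '' Set.Icc (0 : ℝ) 1 ⊆ K.space ∧ γ 0 = x ∧ γ 1 = y ∧
          ∀ s ∈ Set.Icc (0 : ℝ) 1, ∀ t ∈ Set.Icc (0 : ℝ) 1,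
            dist (γ s) (γ t) ≤ lam * dist x y * |s - t| := by
  classical
  set P : Finset (Finset (EuclideanSpace ℝ (Fin n)) × Finset (EuclideanSpace ℝ (Fin n))) :=
    hfin.toFinset ×ˢ hfin.toFinset with hP
  have hhullne : ∀ s ∈ K.faces, (convexHull ℝ (s : Set (EuclideanSpace ℝ (Fin n)))).Nonempty := by
    intro s hs
    have hsne : s.Nonempty := Finset.nonempty_iff_ne_empty.mpr (fun h => K.empty_notMem (h ▸ hs))
    obtain ⟨a, ha⟩ := hsne
    exact ⟨a, subset_convexHull ℝ _ (by exact_mod_cast ha)⟩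
  -- choose ε using pairwise distances of disjoint faces
  obtain ⟨ε, hεpos, hQε⟩ := finset_exists_pos_forall P
    (fun q ε => q.1 ∈ K.faces → q.2 ∈ K.faces →
      convexHull ℝ (q.1 : Set (EuclideanSpace ℝ (Fin n)))
        ∩ convexHull ℝ (q.2 : Set (EuclideanSpace ℝ (Fin n))) = ∅ →
      ∀ x ∈ convexHull ℝ (q.1 : Set (EuclideanSpace ℝ (Fin n))),
        ∀ y ∈ convexHull ℝ (q.2 : Set (EuclideanSpace ℝ (Fin n))), ε ≤ dist x y)
    (by
      intro q a b hapos hab hQ h1 h2 h3 x hx y hy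
      exact le_trans hab (hQ h1 h2 h3 x hx y hy))
    (by
      intro q hq
      by_cases h1 : q.1 ∈ K.faces
      · by_cases h2 : q.2 ∈ K.faces
        · by_cases h3 : convexHull ℝ (q.1 : Set (EuclideanSpace ℝ (Fin n)))
              ∩ convexHull ℝ (q.2 : Set (EuclideanSpace ℝ (Fin n))) = ∅
          · obtain ⟨δ, hδpos, hδ⟩ := disjoint_compact_dist
              (q.1.finite_toSet.isCompact_convexHull (𝕜 := ℝ)) (q.2.finite_toSet.isCompact_convexHull (𝕜 := ℝ))
              (hhullne q.1 h1) (hhullne q.2 h2) h3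
            exact ⟨δ, hδpos, fun _ _ _ => hδ⟩
          · exact ⟨1, one_pos, fun _ _ h3' => absurd h3' h3⟩
        · exact ⟨1, one_pos, fun _ h2' => absurd h2' h2⟩
      · exact ⟨1, one_pos, fun h1' => absurd h1' h1⟩)
  -- choose lam using the near-point constants
  obtain ⟨lam, hlam1, hQl⟩ := finset_exists_ge_forall P
    (fun q M => q.1 ∈ K.faces → q.2 ∈ K.faces →
      (convexHull ℝ (q.1 : Set (EuclideanSpace ℝ (Fin n)))
        ∩ convexHull ℝ (q.2 : Set (EuclideanSpace ℝ (Fin n)))).Nonempty →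
      ∀ x ∈ convexHull ℝ (q.1 : Set (EuclideanSpace ℝ (Fin n))),
        ∀ y ∈ convexHull ℝ (q.2 : Set (EuclideanSpace ℝ (Fin n))),
        ∃ γ : ℝ → EuclideanSpace ℝ (Fin n),
          γ '' Set.Icc (0:ℝ) 1 ⊆ convexHull ℝ (q.1 : Set (EuclideanSpace ℝ (Fin n)))
            ∪ convexHull ℝ (q.2 : Set (EuclideanSpace ℝ (Fin n))) ∧
          γ 0 = x ∧ γ 1 = y ∧
          ∀ u ∈ Set.Icc (0:ℝ) 1, ∀ v ∈ Set.Icc (0:ℝ) 1,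
            dist (γ u) (γ v) ≤ M * dist x y * |u - v|)
    (by
      intro q a b hab hQ h1 h2 h3 x hx y hy
      obtain ⟨γ, hs, h0, hone, hlip⟩ := hQ h1 h2 h3 x hx y hy
      refine ⟨γ, hs, h0, hone, fun u hu v hv => le_trans (hlip u hu v hv) ?_⟩
      have hnn : 0 ≤ dist x y * |u - v| := mul_nonneg dist_nonneg (abs_nonneg _)
      calc a * dist x y * |u - v| = a * (dist x y * |u - v|) := by ring
      _ ≤ b * (dist x y * |u - v|) := mul_le_mul_of_nonneg_right hab hnn
      _ = b * dist x y * |u - v| := by ring)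
    (by
      intro q hq
      by_cases h1 : q.1 ∈ K.faces
      · by_cases h2 : q.2 ∈ K.faces
        · by_cases h3 : (convexHull ℝ (q.1 : Set (EuclideanSpace ℝ (Fin n)))
              ∩ convexHull ℝ (q.2 : Set (EuclideanSpace ℝ (Fin n)))).Nonempty
          · obtain ⟨c₁, hc₁0, hc₁⟩ := exists_near_point (K.indep h1)
              (K.inter_subset_convexHull h1 h2) h3
            have h3' : (convexHull ℝ (q.2 : Set (EuclideanSpace ℝ (Fin n)))
                ∩ convexHull ℝ (q.1 : Set (EuclideanSpace ℝ (Fin n)))).Nonempty := by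
              rw [Set.inter_comm]; exact h3
            obtain ⟨c₂, hc₂0, hc₂⟩ := exists_near_point (K.indep h2)
              (K.inter_subset_convexHull h2 h1) h3'
            refine ⟨3 * (c₁ + c₂ + 1), fun _ _ _ x hx y hy => ?_⟩
            obtain ⟨x', hx'mem, hx'd⟩ := hc₁ x hx y hy
            obtain ⟨y', hy'mem, hy'd⟩ := hc₂ y hy x hx
            have hd0 : (0:ℝ) ≤ dist x y := dist_nonneg
            have hx'A : x' ∈ convexHull ℝ (q.1 : Set (EuclideanSpace ℝ (Fin n))) :=
              convexHull_mono Set.inter_subset_left hx'mem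
            have hy'A : y' ∈ convexHull ℝ (q.1 : Set (EuclideanSpace ℝ (Fin n))) :=
              convexHull_mono Set.inter_subset_right hy'mem
            have hy'B : y' ∈ convexHull ℝ (q.2 : Set (EuclideanSpace ℝ (Fin n))) :=
              convexHull_mono Set.inter_subset_left hy'mem
            have hyd : dist y y' ≤ c₂ * dist x y := by
              rw [dist_comm x y] at *
              exact hy'd
            have leg1 : dist x x' ≤ (c₁ + c₂ + 1) * dist x y := by nlinarith
            have leg3 : dist y' y ≤ (c₁ + c₂ + 1) * dist x y := by
              rw [dist_comm]; nlinarith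
            have leg2 : dist x' y' ≤ (c₁ + c₂ + 1) * dist x y := by
              have t1 : dist x' y' ≤ dist x' x + dist x y' := dist_triangle _ _ _
              have t2 : dist x y' ≤ dist x y + dist y y' := dist_triangle _ _ _
              have t3 : dist x' x = dist x x' := dist_comm _ _
              nlinarith
            obtain ⟨γ, hγsub, hγ0, hγ1, hγlip⟩ := three_leg_path
              (convex_convexHull ℝ _) (convex_convexHull ℝ _)
              hx hx'A hy'A hy'B hy leg1 leg2 leg3
            refine ⟨γ, hγsub, hγ0, hγ1, fun u hu v hv => ?_⟩
            calc dist (γ u) (γ v) ≤ (3 * ((c₁ + c₂ + 1) * dist x y)) * |u - v| := hγlip u hu v hv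
            _ = 3 * (c₁ + c₂ + 1) * dist x y * |u - v| := by ring
          · exact ⟨1, fun _ _ h3' => absurd h3' h3⟩
        · exact ⟨1, fun _ h2' => absurd h2' h2⟩
      · exact ⟨1, fun h1' => absurd h1' h1⟩)
  refine ⟨ε, lam, hεpos, hlam1, ?_⟩
  intro x hx y hy hxy
  obtain ⟨s, hs, hxs⟩ := Geometry.SimplicialComplex.mem_space_iff.mp hx
  obtain ⟨t, ht, hyt⟩ := Geometry.SimplicialComplex.mem_space_iff.mp hy
  have hPst : (s, t) ∈ P := by
    rw [hP, Finset.mem_product]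
    exact ⟨hfin.mem_toFinset.mpr hs, hfin.mem_toFinset.mpr ht⟩
  have hinter : (convexHull ℝ (s : Set (EuclideanSpace ℝ (Fin n)))
      ∩ convexHull ℝ (t : Set (EuclideanSpace ℝ (Fin n)))).Nonempty := by
    rcases Set.eq_empty_or_nonempty (convexHull ℝ (s : Set (EuclideanSpace ℝ (Fin n)))
      ∩ convexHull ℝ (t : Set (EuclideanSpace ℝ (Fin n)))) with h | h
    · exact absurd hxy (not_lt.mpr (hQε (s, t) hPst hs ht h x hxs y hyt))
    · exact h
  obtain ⟨γ, hγs, hγ0, hγ1, hγl⟩ := hQl (s, t) hPst hs ht hinter x hxs y hyt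
  exact ⟨γ, hγs.trans (Set.union_subset (K.convexHull_subset_space hs)
    (K.convexHull_subset_space ht)), hγ0, hγ1, hγl⟩
end

section
/- Let n ≥ 2, let μ be a finite Borel measure on ℝⁿ, let u : ℝⁿ → [0,∞] be Borel, and let r > 0. Then ∫_{B(0,r)} ( ∫_0^1 ∫_{ℝⁿ} u(z + t x) dμ(z) dt ) dx ≤ (n−1)^{-1} r^{n−1} ∫_{ℝⁿ} I_r(u)(y) dμ(y). -/
open MeasureTheory Metric Set ENNReal

private lemma lintegral_comp_smul_aux {n : ℕ} (f : EuclideanSpace ℝ (Fin n) → ℝ≥0∞)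
    (hf : Measurable f) {t : ℝ} (ht : 0 < t) :
    ∫⁻ x, f (t • x) = ENNReal.ofReal ((t ^ n)⁻¹) * ∫⁻ x, f x := by
  rw [← lintegral_map hf (measurable_const_smul t),
    Measure.map_addHaar_smul volume ht.ne', lintegral_smul_measure]
  congr 2
  rw [finrank_euclideanSpace_fin, abs_of_nonneg (by positivity)]

private lemma kernel_bound {n : ℕ} (hn : 2 ≤ n) {r : ℝ} (hr : 0 < r) {b : ℝ} (hb : 0 ≤ b) :
    (∫⁻ t in Set.Ioc (0:ℝ) 1, if b < t * r then ENNReal.ofReal ((t ^ n)⁻¹) else 0) ≤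
      if b < r then
        ((n : ℝ≥0∞) - 1)⁻¹ * ENNReal.ofReal r ^ (n-1) / ENNReal.ofReal b ^ (n-1) else 0 := by
  obtain ⟨m, rfl⟩ : ∃ m, n = m + 2 := ⟨n - 2, by omega⟩
  have hm1 : (m + 2) - 1 = m + 1 := by omega
  by_cases hbr : b < r
  · simp only [hbr, if_true]
    rcases eq_or_lt_of_le hb with hb0 | hb0
    · -- b = 0 : RHS is ∞
      have : ENNReal.ofReal b ^ (m + 2 - 1) = 0 := by
        rw [← hb0, hm1]; simp
      rw [this, ENNReal.div_zero]
      · exact le_top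
      · refine mul_ne_zero ?_ (pow_ne_zero _ (by simp [hr, hr.le, ENNReal.ofReal_pos]))
        rw [Ne, ENNReal.inv_eq_zero]
        refine ENNReal.sub_ne_top (by simp)
    · -- 0 < b < r
      set a : ℝ := b / r with ha_def
      have ha : 0 < a := div_pos hb0 hr
      have hcn : -((m:ℝ) + 2) < -1 := by linarith [ (Nat.cast_nonneg m : (0:ℝ) ≤ m) ]
      calc (∫⁻ t in Set.Ioc (0:ℝ) 1, if b < t * r then ENNReal.ofReal ((t ^ (m+2))⁻¹) else 0)
          ≤ ∫⁻ t in Set.Ioc (0:ℝ) 1,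
              (Set.Ioi a).indicator (fun t => ENNReal.ofReal ((t ^ (m+2))⁻¹)) t := by
            refine lintegral_mono fun t => ?_
            by_cases h : b < t * r
            · have : a < t := (div_lt_iff₀ hr).2 (by linarith)
              rw [if_pos h]
              exact le_of_eq (Set.indicator_of_mem (Set.mem_Ioi.2 this) (fun t => ENNReal.ofReal ((t ^ (m+2))⁻¹))).symm
            · exact by simp [h]
        _ ≤ ∫⁻ t, (Set.Ioi a).indicator (fun t => ENNReal.ofReal ((t ^ (m+2))⁻¹)) t :=
            setLIntegral_le_lintegral _ _
        _ = ∫⁻ t in Set.Ioi a, ENNReal.ofReal ((t ^ (m+2))⁻¹) :=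
            lintegral_indicator measurableSet_Ioi _
        _ = ∫⁻ t in Set.Ioi a, ENNReal.ofReal (t ^ (-((m:ℝ) + 2))) := by
            refine setLIntegral_congr_fun measurableSet_Ioi (
              fun t ht => ?_)
            have htp : 0 < t := ha.trans ht
            rw [Real.rpow_neg htp.le]
            norm_num
            rw [← Real.rpow_natCast t (m+2)]
            norm_num
        _ = ENNReal.ofReal (∫ t in Set.Ioi a, t ^ (-((m:ℝ) + 2))) := by
            refine (ofReal_integral_eq_lintegral_ofReal ?_ ?_).symm
            · exact integrableOn_Ioi_rpow_of_lt hcn ha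
            · filter_upwards [ae_restrict_mem measurableSet_Ioi] with t ht
              exact Real.rpow_nonneg (ha.trans ht).le _
        _ = ENNReal.ofReal (-a ^ (-((m:ℝ) + 2) + 1) / (-((m:ℝ) + 2) + 1)) := by
            rw [integral_Ioi_rpow_of_lt hcn ha]
        _ = ((↑(m+2) : ℝ≥0∞) - 1)⁻¹ * ENNReal.ofReal r ^ (m + 2 - 1) /
              ENNReal.ofReal b ^ (m + 2 - 1) := by
            have h1 : -((m:ℝ) + 2) + 1 = -((m:ℝ) + 1) := by ring
            have h2 : a ^ (-((m:ℝ)+1)) = r ^ (m+1) / b ^ (m+1) := by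
              have he : -((m:ℝ)+1) = -(((m+1:ℕ)):ℝ) := by push_cast; ring
              rw [he, Real.rpow_neg ha.le, Real.rpow_natCast, ha_def, div_pow, inv_div]
            rw [h1, h2, hm1]
            have hcast : ((↑(m+2) : ℝ≥0∞) - 1) = ((m+1 : ℕ) : ℝ≥0∞) := by
              rw [show ((m+2:ℕ):ℝ≥0∞) = ((m+1:ℕ):ℝ≥0∞) + 1 by push_cast; ring,
                ENNReal.add_sub_cancel_right ENNReal.one_ne_top]
            rw [hcast]
            have hb1 : (0:ℝ) < b ^ (m+1) := by positivity
            have hr1 : (0:ℝ) ≤ r ^ (m+1) := by positivity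
            rw [← ENNReal.ofReal_pow hr.le, ← ENNReal.ofReal_pow hb]
            rw [← ENNReal.ofReal_natCast (m+1), ← ENNReal.ofReal_inv_of_pos (by positivity)]
            rw [← ENNReal.ofReal_mul (by positivity), ← ENNReal.ofReal_div_of_pos hb1]
            congr 1
            rw [neg_div_neg_eq, div_div, div_eq_mul_inv, div_eq_mul_inv, mul_inv]
            push_cast
            ring
  · -- r ≤ b : LHS is 0
    simp only [hbr, if_false]
    have : ∀ᵐ t ∂(volume.restrict (Set.Ioc (0:ℝ) 1)),
        (if b < t * r then ENNReal.ofReal ((t ^ (m+2))⁻¹) else 0) = 0 := by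
      filter_upwards [ae_restrict_mem measurableSet_Ioc] with t ht
      have : t * r ≤ r := by nlinarith [ht.1, ht.2, hr]
      rw [if_neg (by push_neg; linarith [not_lt.1 hbr])]
    rw [lintegral_congr_ae this, lintegral_zero]

/-- For `n ≥ 2`, a finite Borel measure `μ` on `ℝⁿ`, a Borel function
`u : ℝⁿ → [0,∞]` and `r > 0`,
`∫_{B(0,r)} ∫_0^1 ∫ u(z + t x) dμ(z) dt dx ≤ (n−1)⁻¹ r^{n−1} ∫ I_r(u)(y) dμ(y)`,
where `I_r(u)(y) = ∫_{B(y,r)} u(x) |x−y|^{-(n-1)} dx` is the truncated Riesz potential. -/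
theorem riesz_potential_translation_estimate
    (n : ℕ) (hn : 2 ≤ n) (μ : Measure (EuclideanSpace ℝ (Fin n))) [IsFiniteMeasure μ]
    (u : EuclideanSpace ℝ (Fin n) → ℝ≥0∞) (hu : Measurable u) (r : ℝ) (hr : 0 < r) :
    (∫⁻ x in Metric.ball (0 : EuclideanSpace ℝ (Fin n)) r,
        ∫⁻ t in Set.Icc (0 : ℝ) 1, ∫⁻ z, u (z + t • x) ∂μ) ≤
      ((n : ℝ≥0∞) - 1)⁻¹ * ENNReal.ofReal r ^ (n - 1) *
        ∫⁻ y, (∫⁻ x in Metric.ball y r, u x / ENNReal.ofReal (dist x y) ^ (n - 1)) ∂μ := by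
  set C : ℝ≥0∞ := ((n : ℝ≥0∞) - 1)⁻¹ * ENNReal.ofReal r ^ (n - 1) with hC
  have hC_ne_top : C ≠ ⊤ := by
    apply ENNReal.mul_ne_top
    · rw [Ne, ENNReal.inv_eq_top]
      have : (1 : ℝ≥0∞) < (n : ℝ≥0∞) := by exact_mod_cast (by omega : 1 < n)
      exact (tsub_pos_of_lt this).ne'
    · exact ENNReal.pow_ne_top ENNReal.ofReal_ne_top
  -- replace Icc by Ioc
  have hIcc : (volume : Measure ℝ).restrict (Set.Icc (0:ℝ) 1)
      = (volume : Measure ℝ).restrict (Set.Ioc (0:ℝ) 1) :=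
    (Measure.restrict_congr_set Ioc_ae_eq_Icc).symm
  simp only [hIcc]
  -- swap x and t
  have hmeas1 : Measurable fun p : EuclideanSpace ℝ (Fin n) × ℝ =>
      ∫⁻ z, u (z + p.2 • p.1) ∂μ :=
    Measurable.lintegral_prod_right'
      (hu.comp (measurable_snd.add (measurable_fst.snd.smul measurable_fst.fst)))
  rw [lintegral_lintegral_swap hmeas1.aemeasurable]
  -- swap x and z
  have hswap2 : ∀ t : ℝ,
      (∫⁻ x in ball (0 : EuclideanSpace ℝ (Fin n)) r, ∫⁻ z, u (z + t • x) ∂μ)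
        = ∫⁻ z, (∫⁻ x in ball (0 : EuclideanSpace ℝ (Fin n)) r, u (z + t • x)) ∂μ := by
    intro t
    apply lintegral_lintegral_swap
    exact (hu.comp (measurable_snd.add (measurable_fst.const_smul t))).aemeasurable
  simp_rw [hswap2]
  -- change of variables y = t • x
  have hcv : ∀ t ∈ Set.Ioc (0:ℝ) 1, ∀ z,
      (∫⁻ x in ball (0 : EuclideanSpace ℝ (Fin n)) r, u (z + t • x))
        = ∫⁻ y, ENNReal.ofReal ((t ^ n)⁻¹) * (if ‖y‖ < t * r then u (z + y) else 0) := by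
    intro t ht z
    have ht0 : 0 < t := ht.1
    have hmeasH : Measurable fun y : EuclideanSpace ℝ (Fin n) =>
        (if ‖y‖ < t * r then u (z + y) else 0 : ℝ≥0∞) :=
      Measurable.ite (measurableSet_lt measurable_norm measurable_const)
        (hu.comp (measurable_const.add measurable_id)) measurable_const
    calc (∫⁻ x in ball (0 : EuclideanSpace ℝ (Fin n)) r, u (z + t • x))
        = ∫⁻ x, (fun y => if ‖y‖ < t * r then u (z + y) else 0) (t • x) := by
          rw [← lintegral_indicator measurableSet_ball]
          congr 1
          funext x
          by_cases hx : x ∈ ball (0 : EuclideanSpace ℝ (Fin n)) r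
          · rw [Set.indicator_of_mem hx]
            have hlt : ‖t • x‖ < t * r := by
              rw [norm_smul, Real.norm_eq_abs, abs_of_pos ht0]
              exact mul_lt_mul_of_pos_left (mem_ball_zero_iff.1 hx) ht0
            simp only [hlt, if_true, smul_eq_mul]
          · rw [Set.indicator_of_notMem hx]
            have hnlt : ¬ ‖t • x‖ < t * r := by
              rw [norm_smul, Real.norm_eq_abs, abs_of_pos ht0]
              intro h
              exact hx (mem_ball_zero_iff.2 ((mul_lt_mul_iff_right₀ ht0).1 h))
            simp only [hnlt, if_false]
      _ = ENNReal.ofReal ((t ^ n)⁻¹) * ∫⁻ y, (if ‖y‖ < t * r then u (z + y) else 0) :=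
          lintegral_comp_smul_aux _ hmeasH ht0
      _ = ∫⁻ y, ENNReal.ofReal ((t ^ n)⁻¹) * (if ‖y‖ < t * r then u (z + y) else 0) :=
          (lintegral_const_mul _ hmeasH).symm
  rw [setLIntegral_congr_fun measurableSet_Ioc (fun t ht =>
    lintegral_congr fun z => hcv t ht z)]
  -- swap t and z
  have hmeas3 : Measurable fun p : ℝ × EuclideanSpace ℝ (Fin n) =>
      ∫⁻ y, ENNReal.ofReal ((p.1 ^ n)⁻¹) * (if ‖y‖ < p.1 * r then u (p.2 + y) else 0) := by
    refine Measurable.lintegral_prod_right'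
      (f := fun q : (ℝ × EuclideanSpace ℝ (Fin n)) × EuclideanSpace ℝ (Fin n) =>
        ENNReal.ofReal ((q.1.1 ^ n)⁻¹) * (if ‖q.2‖ < q.1.1 * r then u (q.1.2 + q.2) else 0)) ?_
    apply Measurable.mul
    · exact ((measurable_fst.fst.pow_const n).inv).ennreal_ofReal
    · apply Measurable.ite
      · exact measurableSet_lt measurable_snd.norm (measurable_fst.fst.mul_const r)
      · exact hu.comp (measurable_fst.snd.add measurable_snd)
      · exact measurable_const
  rw [lintegral_lintegral_swap hmeas3.aemeasurable]
  -- per-z estimate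
  have hkey : ∀ z : EuclideanSpace ℝ (Fin n),
      (∫⁻ t in Set.Ioc (0:ℝ) 1,
          ∫⁻ y, ENNReal.ofReal ((t ^ n)⁻¹) * (if ‖y‖ < t * r then u (z + y) else 0))
        ≤ C * ∫⁻ x in ball z r, u x / ENNReal.ofReal (dist x z) ^ (n - 1) := by
    intro z
    have hmeas4 : Measurable fun p : ℝ × EuclideanSpace ℝ (Fin n) =>
        ENNReal.ofReal ((p.1 ^ n)⁻¹) * (if ‖p.2‖ < p.1 * r then u (z + p.2) else 0) := by
      apply Measurable.mul
      · exact ((measurable_fst.pow_const n).inv).ennreal_ofReal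
      · exact Measurable.ite
          (measurableSet_lt (measurable_norm.comp measurable_snd) (measurable_fst.mul_const r))
          (hu.comp (measurable_const.add measurable_snd)) measurable_const
    rw [lintegral_lintegral_swap hmeas4.aemeasurable]
    have hpull : ∀ y : EuclideanSpace ℝ (Fin n),
        (∫⁻ t in Set.Ioc (0:ℝ) 1,
            ENNReal.ofReal ((t ^ n)⁻¹) * (if ‖y‖ < t * r then u (z + y) else 0))
          = u (z + y) * ∫⁻ t in Set.Ioc (0:ℝ) 1,
              (if ‖y‖ < t * r then ENNReal.ofReal ((t ^ n)⁻¹) else 0) := by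
      intro y
      have hm : Measurable fun t : ℝ =>
          (if ‖y‖ < t * r then ENNReal.ofReal ((t ^ n)⁻¹) else 0 : ℝ≥0∞) := by
        apply Measurable.ite
        · exact measurableSet_lt measurable_const (measurable_id'.mul_const r)
        · exact ((measurable_id'.pow_const n).inv).ennreal_ofReal
        · exact measurable_const
      rw [← lintegral_const_mul _ hm]
      congr 1
      funext t
      by_cases h : ‖y‖ < t * r <;> simp [h, mul_comm]
    simp_rw [hpull]
    have hpt : ∀ y : EuclideanSpace ℝ (Fin n),
        u (z + y) * (∫⁻ t in Set.Ioc (0:ℝ) 1,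
            (if ‖y‖ < t * r then ENNReal.ofReal ((t ^ n)⁻¹) else 0))
          ≤ (fun x => C * (ball z r).indicator
              (fun x => u x / ENNReal.ofReal (dist x z) ^ (n - 1)) x) (z + y) := by
      intro y
      have hk := kernel_bound hn hr (norm_nonneg y)
      have hdist : dist (z + y) z = ‖y‖ := by simp [dist_eq_norm]
      by_cases h : ‖y‖ < r
      · have hmem : z + y ∈ ball z r := by rw [mem_ball, hdist]; exact h
        rw [if_pos h] at hk
        simp only [Set.indicator_of_mem hmem]
        calc u (z + y) * (∫⁻ t in Set.Ioc (0:ℝ) 1,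
                (if ‖y‖ < t * r then ENNReal.ofReal ((t ^ n)⁻¹) else 0))
            ≤ u (z + y) * (C / ENNReal.ofReal ‖y‖ ^ (n - 1)) := mul_le_mul_right hk _
          _ = C * (u (z + y) / ENNReal.ofReal (dist (z + y) z) ^ (n - 1)) := by
              rw [hdist, div_eq_mul_inv, div_eq_mul_inv]
              ring
      · rw [if_neg h] at hk
        have h0 : (∫⁻ t in Set.Ioc (0:ℝ) 1,
            (if ‖y‖ < t * r then ENNReal.ofReal ((t ^ n)⁻¹) else 0)) = 0 :=
          le_antisymm hk zero_le
        rw [h0, mul_zero]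
        exact zero_le
    calc (∫⁻ y, u (z + y) * ∫⁻ t in Set.Ioc (0:ℝ) 1,
            (if ‖y‖ < t * r then ENNReal.ofReal ((t ^ n)⁻¹) else 0))
        ≤ ∫⁻ y, (fun x => C * (ball z r).indicator
            (fun x => u x / ENNReal.ofReal (dist x z) ^ (n - 1)) x) (z + y) :=
          lintegral_mono hpt
      _ = ∫⁻ x, C * (ball z r).indicator
            (fun x => u x / ENNReal.ofReal (dist x z) ^ (n - 1)) x :=
          lintegral_add_left_eq_self (fun x => C * (ball z r).indicator
            (fun x => u x / ENNReal.ofReal (dist x z) ^ (n - 1)) x) z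
      _ = C * ∫⁻ x, (ball z r).indicator
            (fun x => u x / ENNReal.ofReal (dist x z) ^ (n - 1)) x :=
          lintegral_const_mul' _ _ hC_ne_top
      _ = C * ∫⁻ x in ball z r, u x / ENNReal.ofReal (dist x z) ^ (n - 1) := by
          rw [lintegral_indicator measurableSet_ball]
  calc (∫⁻ z, (∫⁻ t in Set.Ioc (0:ℝ) 1,
          ∫⁻ y, ENNReal.ofReal ((t ^ n)⁻¹) * (if ‖y‖ < t * r then u (z + y) else 0)) ∂μ)
      ≤ ∫⁻ z, C * (∫⁻ x in ball z r, u x / ENNReal.ofReal (dist x z) ^ (n - 1)) ∂μ :=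
        lintegral_mono hkey
    _ = C * ∫⁻ z, (∫⁻ x in ball z r, u x / ENNReal.ofReal (dist x z) ^ (n - 1)) ∂μ :=
        lintegral_const_mul' _ _ hC_ne_top
end

section
/- Let n ≥ 2, let μ and σ be finite Borel measures on ℝⁿ, let K denote the support of μ, and let r > 0, t ≥ 1 and A > 0. For each integer j ≥ 0 set N_j = { x ∈ ℝⁿ : 2^{-j} r / t < dist(x, K) < 2^{-j} r }. Assume that for every y ∈ K and every integer j ≥ 0, σ( (B(y, 2^{-j} r) \ closedB(y, 2^{-j-1} r)) ∩ N_j ) ≥ A 2^{-j} r μ(B(y, 2^{-j+1} r)). Then there exists a constant C depending only on n and A such that for every Borel function h : ℝⁿ → [0,∞], ∫_{ℝⁿ} I_r(h)(y) dμ(y) ≤ C ∫_{{x : dist(x, K) < r}} Mh(x) dσ(x). -/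
open MeasureTheory Metric Set ENNReal

/-- The (centered) Hardy–Littlewood maximal function of `f : ℝⁿ → [0,∞]`:
`Mf(x) = sup_{ρ>0} λⁿ(B(x,ρ))⁻¹ ∫_{B(x,ρ)} f dλⁿ`. -/
noncomputable def maximalFn {n : ℕ} (f : EuclideanSpace ℝ (Fin n) → ℝ≥0∞)
    (x : EuclideanSpace ℝ (Fin n)) : ℝ≥0∞ :=
  ⨆ (ρ : ℝ) (_ : 0 < ρ), (volume (Metric.ball x ρ))⁻¹ * ∫⁻ y in Metric.ball x ρ, f y

/-- The support of a Borel measure `μ` on `ℝⁿ`: the set of points all of whose balls have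
positive measure. -/
def measSupport {n : ℕ} (μ : Measure (EuclideanSpace ℝ (Fin n))) :
    Set (EuclideanSpace ℝ (Fin n)) :=
  {x | ∀ ρ : ℝ, 0 < ρ → 0 < μ (Metric.ball x ρ)}

namespace RieszAux

/-! ### dyadic real helpers -/

lemma two_zpow_pos (e : ℤ) : (0:ℝ) < 2 ^ e := zpow_pos (by norm_num) e

lemma two_zpow_le {e f : ℤ} (h : e ≤ f) : (2:ℝ) ^ e ≤ 2 ^ f :=
  zpow_le_zpow_right₀ one_le_two h

lemma ofReal_two_zpow (e : ℤ) : ENNReal.ofReal ((2:ℝ) ^ e) = 2 ^ e := by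
  obtain ⟨k, rfl | rfl⟩ := e.eq_nat_or_neg
  · rw [zpow_natCast, zpow_natCast, ENNReal.ofReal_pow (by norm_num)]
    norm_num
  · rw [zpow_neg, zpow_natCast, ENNReal.ofReal_inv_of_pos (by positivity),
      ENNReal.ofReal_pow (by norm_num), ENNReal.zpow_neg, zpow_natCast]
    norm_num

abbrev Eucl (n : ℕ) := EuclideanSpace ℝ (Fin n)

noncomputable def V1 (n : ℕ) : ℝ≥0∞ := volume (ball (0 : Eucl n) 1)

lemma V1_pos (n : ℕ) : 0 < V1 n := measure_ball_pos _ _ one_pos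

lemma V1_ne_top (n : ℕ) : V1 n ≠ ∞ := measure_ball_lt_top.ne

lemma vol_ball {n : ℕ} (hn : 1 ≤ n) (x : Eucl n) {s : ℝ} (hs : 0 ≤ s) :
    volume (ball x s) = ENNReal.ofReal (s ^ n) * V1 n := by
  haveI : Nonempty (Fin n) := ⟨⟨0, hn⟩⟩
  rw [Measure.addHaar_ball volume x hs, finrank_euclideanSpace_fin]
  rfl

lemma vol_ball_pos {n : ℕ} (hn : 1 ≤ n) (x : Eucl n) {s : ℝ} (hs : 0 < s) :
    0 < volume (ball x s) := measure_ball_pos _ _ hs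

lemma vol_ball_ne_top {n : ℕ} (x : Eucl n) (s : ℝ) :
    volume (ball x s) ≠ ∞ := measure_ball_lt_top.ne

/-! ### support of a measure -/

lemma isClosed_measSupport {n : ℕ} (μ : Measure (Eucl n)) :
    IsClosed (measSupport μ) := by
  rw [← isOpen_compl_iff, isOpen_iff]
  intro x hx
  simp only [measSupport, mem_compl_iff, mem_setOf_eq, not_forall] at hx
  obtain ⟨s, hs, hμs⟩ := hx
  refine ⟨s/2, by positivity, fun y hy => ?_⟩
  simp only [measSupport, mem_compl_iff, mem_setOf_eq, not_forall]
  refine ⟨s/2, by positivity, ?_⟩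
  have hsub : ball y (s/2) ⊆ ball x s := by
    intro z hz
    have : dist z y < s/2 := mem_ball.mp hz
    have hyx : dist y x < s/2 := mem_ball.mp hy
    have : dist z x < s := by
      calc dist z x ≤ dist z y + dist y x := dist_triangle _ _ _
        _ < s/2 + s/2 := by linarith
        _ = s := by ring
    exact mem_ball.mpr this
  intro hpos
  have := measure_mono (μ := μ) hsub
  have h0 : μ (ball x s) = 0 := by
    by_contra h0
    exact hμs (pos_iff_ne_zero.mpr h0)
  rw [h0] at this
  exact absurd (le_antisymm this zero_le) (ne_of_gt hpos)

lemma measure_compl_measSupport {n : ℕ} (μ : Measure (Eucl n)) :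
    μ (measSupport μ)ᶜ = 0 := by
  classical
  -- each point of the complement has a null ball
  have hball : ∀ x : ((measSupport μ)ᶜ : Set (Eucl n)), ∃ s : ℝ, 0 < s ∧ μ (ball (x : Eucl n) s) = 0 := by
    rintro ⟨x, hx⟩
    simp only [measSupport, mem_compl_iff, mem_setOf_eq, not_forall] at hx
    obtain ⟨s, hs, hμs⟩ := hx
    refine ⟨s, hs, ?_⟩
    by_contra h0
    exact hμs (pos_iff_ne_zero.mpr h0)
  choose s hs hμs using hball
  obtain ⟨T, hTc, hTeq⟩ := TopologicalSpace.isOpen_iUnion_countable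
    (fun x : ((measSupport μ)ᶜ : Set (Eucl n)) => ball (x : Eucl n) (s x))
    (fun x => isOpen_ball)
  have hcover : (measSupport μ)ᶜ ⊆ ⋃ x ∈ T, ball (x : Eucl n) (s x) := by
    rw [hTeq]
    intro x hx
    exact mem_iUnion.mpr ⟨⟨x, hx⟩, mem_ball_self (hs ⟨x, hx⟩)⟩
  refine le_antisymm ?_ zero_le
  calc μ (measSupport μ)ᶜ ≤ μ (⋃ x ∈ T, ball (x : Eucl n) (s x)) := measure_mono hcover
    _ = μ (⋃ x : T, ball ((x : ((measSupport μ)ᶜ : Set (Eucl n))) : Eucl n) (s x)) := by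
        rw [Set.biUnion_eq_iUnion]
    _ ≤ ∑' x : T, μ (ball ((x : ((measSupport μ)ᶜ : Set (Eucl n))) : Eucl n) (s x)) := by
        haveI := hTc.to_subtype
        exact measure_iUnion_le _
    _ = 0 := by simp [hμs]

end RieszAux
section Part2
open MeasureTheory Metric Set ENNReal
namespace RieszAux

lemma exists_maxSep {X : Type*} [MetricSpace X] (s : Set X) {ε : ℝ} (hε : 0 < ε) :
    ∃ u : Set X, u ⊆ s ∧ (u.Pairwise fun a b => ε ≤ dist a b) ∧
      ∀ y ∈ s, ∃ z ∈ u, dist y z < ε := by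
  set S : Set (Set X) := {u : Set X | u ⊆ s ∧ u.Pairwise fun a b => ε ≤ dist a b} with hS
  have hch : ∀ c ⊆ S, IsChain (· ⊆ ·) c → ∃ ub ∈ S, ∀ s ∈ c, s ⊆ ub := by
    intro c hcS hchain
    refine ⟨⋃₀ c, ⟨?_, ?_⟩, fun t ht => subset_sUnion_of_mem ht⟩
    · exact sUnion_subset fun t ht => (hcS ht).1
    · intro a ha b hb hab
      obtain ⟨ta, hta, hata⟩ := ha
      obtain ⟨tb, htb, hbtb⟩ := hb
      rcases eq_or_ne ta tb with rfl | htatb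
      · exact (hcS hta).2 hata hbtb hab
      · rcases hchain hta htb htatb with hsub | hsub
        · exact (hcS htb).2 (hsub hata) hbtb hab
        · exact (hcS hta).2 hata (hsub hbtb) hab
  obtain ⟨u, hu⟩ := zorn_subset S hch
  · obtain ⟨⟨hus, husep⟩, hmax⟩ := hu
    refine ⟨u, hus, husep, fun y hy => ?_⟩
    by_contra hc
    push_neg at hc
    have hyu : y ∉ u := by
      intro hyu
      have := hc y hyu
      rw [dist_self] at this
      linarith
    have hins : insert y u ∈ S := by
      constructor
      · exact insert_subset hy hus
      · intro p hp q hq hpq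
        rcases hp with rfl | hp
        · rcases hq with rfl | hq
          · exact absurd rfl hpq
          · exact hc q hq
        · rcases hq with rfl | hq
          · rw [dist_comm]; exact hc p hp
          · exact husep hp hq hpq
    have := hmax hins (subset_insert y u)
    exact hyu (this (mem_insert y u))

lemma countable_of_sep {X : Type*} [MetricSpace X] [TopologicalSpace.SeparableSpace X]
    {u : Set X} {ε : ℝ} (hε : 0 < ε)
    (hsep : u.Pairwise fun a b => ε ≤ dist a b) : u.Countable := by
  obtain ⟨D, hDc, hDd⟩ := TopologicalSpace.exists_countable_dense X
  have hchoice : ∀ z : u, ∃ d : X, d ∈ D ∧ dist (z : X) d < ε / 2 := by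
    rintro ⟨z, hz⟩
    obtain ⟨d, hd⟩ := Metric.dense_iff.mp hDd z (ε/2) (by positivity)
    exact ⟨d, hd.2, by have := mem_ball.mp hd.1; rwa [dist_comm]⟩
  choose f hfD hfd using hchoice
  haveI : Countable D := hDc.to_subtype
  have hinj : Function.Injective (fun z : u => (⟨f z, hfD z⟩ : D)) := by
    rintro ⟨z, hz⟩ ⟨z', hz'⟩ hzz'
    simp only [Subtype.mk.injEq] at hzz'
    by_contra hne
    have hne' : z ≠ z' := fun h => hne (by simpa using h)
    have := hsep hz hz' hne'
    have h1 := hfd ⟨z, hz⟩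
    have h2 := hfd ⟨z', hz'⟩
    rw [hzz'] at h1
    have : dist z z' ≤ dist z (f ⟨z', hz'⟩) + dist (f ⟨z', hz'⟩) z' := dist_triangle _ _ _
    rw [dist_comm (f ⟨z', hz'⟩) z'] at this
    linarith
  haveI : Countable u := Function.Injective.countable hinj
  exact Set.countable_coe_iff.mp inferInstance

/-- Greedy multi-scale selection. -/
lemma greedy {X : Type*} [MetricSpace X] [TopologicalSpace.SeparableSpace X]
    (C : ℕ → Set X) (ε δ : ℕ → ℝ) (hε : ∀ k, 0 < ε k) (hεδ : ∀ k, ε k ≤ δ k) :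
    ∃ sel : ℕ → Set X,
      (∀ k, sel k ⊆ C k) ∧ (∀ k, (sel k).Countable) ∧
      (∀ k, (sel k).Pairwise fun a b => ε k ≤ dist a b) ∧
      (∀ k, ∀ y ∈ C k, ∃ k', k' ≤ k ∧ ∃ z ∈ sel k', dist y z < δ k') ∧
      (∀ k k', k < k' → ∀ z ∈ sel k, ∀ z' ∈ sel k', δ k ≤ dist z z') := by
  classical
  have hex : ∀ (k : ℕ) (s : Set X), ∃ u : Set X, u ⊆ (C k \ s) ∧
      (u.Pairwise fun a b => ε k ≤ dist a b) ∧ ∀ y ∈ (C k \ s), ∃ z ∈ u, dist y z < ε k :=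
    fun k s => exists_maxSep (C k \ s) (hε k)
  choose pick hpick₁ hpick₂ hpick₃ using hex
  let cov : ℕ → Set X := fun k =>
    Nat.rec ∅ (fun k acc => acc ∪ ⋃ z ∈ pick k acc, ball z (δ k)) k
  have hcovS : ∀ k, cov (k+1) = cov k ∪ ⋃ z ∈ pick k (cov k), ball z (δ k) := fun k => rfl
  set sel : ℕ → Set X := fun k => pick k (cov k) with hsel
  have hcovmono : ∀ {a b : ℕ}, a ≤ b → cov a ⊆ cov b := by
    intro a b hab
    induction hab with
    | refl => exact subset_rfl
    | @step b' h ih =>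
        rw [hcovS b']
        exact ih.trans subset_union_left
  have hballcov : ∀ k z, z ∈ sel k → ball z (δ k) ⊆ cov (k+1) := by
    intro k z hz
    rw [hcovS k]
    intro w hw
    exact Or.inr (mem_biUnion hz hw)
  have hcovstruct : ∀ k, ∀ y ∈ cov k, ∃ k', k' < k ∧ ∃ z ∈ sel k', dist y z < δ k' := by
    intro k
    induction k with
    | zero => intro y hy; exact absurd hy (by simp [cov])
    | succ k ih =>
        intro y hy
        rw [hcovS k] at hy
        rcases hy with hy | hy
        · obtain ⟨k', hk', hz⟩ := ih y hy
          exact ⟨k', hk'.trans (Nat.lt_succ_self k), hz⟩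
        · simp only [mem_iUnion] at hy
          obtain ⟨z, hzsel, hyz⟩ := hy
          exact ⟨k, Nat.lt_succ_self k, z, hzsel, mem_ball.mp hyz⟩
  have hcover : ∀ k, ∀ y ∈ C k, ∃ k', k' ≤ k ∧ ∃ z ∈ sel k', dist y z < δ k' := by
    intro k y hy
    rcases Classical.em (y ∈ cov k) with hyc | hyc
    · obtain ⟨k', hk', z, hz, hd⟩ := hcovstruct k y hyc
      exact ⟨k', hk'.le, z, hz, hd⟩
    · obtain ⟨z, hz, hd⟩ := hpick₃ k (cov k) y ⟨hy, hyc⟩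
      exact ⟨k, le_rfl, z, hz, hd.trans_le (hεδ k)⟩
  have hcross : ∀ k k', k < k' → ∀ z ∈ sel k, ∀ z' ∈ sel k', δ k ≤ dist z z' := by
    intro k k' hkk' z hz z' hz'
    have hz'ncov : z' ∉ cov k' := ((hpick₁ k' (cov k')) hz').2
    have hnb : z' ∉ ball z (δ k) := by
      intro hmem
      exact hz'ncov (hcovmono (Nat.succ_le_of_lt hkk') (hballcov k z hz hmem))
    rw [mem_ball] at hnb
    push_neg at hnb
    rwa [dist_comm] at hnb
  exact ⟨sel, fun k => (hpick₁ k (cov k)).trans diff_subset,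
    fun k => countable_of_sep (hε k) (hpick₂ k (cov k)),
    fun k => hpick₂ k (cov k), hcover, hcross⟩

/-- Packing: if points of a finset are `2^{-k} r`-separated and all within
distance `2^{-j} r` of `x`, with `j ≤ k ≤ j+1`, then there are at most `2^(3n)` of them. -/
lemma packing {n : ℕ} (hn : 1 ≤ n) {r : ℝ} (hr : 0 < r) {k j : ℕ} (hjk : j ≤ k) (hkj : k ≤ j + 1)
    (x : Eucl n) (s : Finset (Eucl n))
    (hsep : (↑s : Set (Eucl n)).Pairwise fun a b => (2:ℝ)^(-(k:ℤ)) * r ≤ dist a b)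
    (hmem : ∀ z ∈ s, dist x z < (2:ℝ)^(-(j:ℤ)) * r) :
    (s.card : ℝ≥0∞) ≤ 2 ^ (3*n) := by
  classical
  set a : ℝ := (2:ℝ)^(-(k:ℤ)-1) * r with ha
  have ha_pos : 0 < a := by positivity
  have haa : a + a = (2:ℝ)^(-(k:ℤ)) * r := by
    rw [ha]
    rw [show (-(k:ℤ)-1) = (-(k:ℤ)) + (-1) by ring, zpow_add₀ (by norm_num : (2:ℝ) ≠ 0)]
    ring_nf
  have hdisj : (↑s : Set (Eucl n)).PairwiseDisjoint (fun z => ball z a) := by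
    intro z hz z' hz' hne
    apply ball_disjoint_ball
    rw [haa]
    exact hsep hz hz' hne
  have hmeas : ∀ z ∈ s, MeasurableSet (ball z a) := fun z _ => measurableSet_ball
  have hUnion : volume (⋃ z ∈ s, ball z a) = ∑ z ∈ s, volume (ball z a) :=
    measure_biUnion_finset hdisj hmeas
  have hvol_eq : ∀ z ∈ s, volume (ball z a) = ENNReal.ofReal (a ^ n) * V1 n :=
    fun z _ => vol_ball hn z ha_pos.le
  have hsum : ∑ z ∈ s, volume (ball z a) = (s.card : ℝ≥0∞) * (ENNReal.ofReal (a ^ n) * V1 n) := by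
    rw [Finset.sum_congr rfl hvol_eq, Finset.sum_const, nsmul_eq_mul]
  set R : ℝ := (2:ℝ)^(-(j:ℤ)+1) * r with hR
  have haj : a ≤ (2:ℝ)^(-(j:ℤ)) * r := by
    apply mul_le_mul_of_nonneg_right _ hr.le
    exact two_zpow_le (by omega)
  have hsub : (⋃ z ∈ s, ball z a) ⊆ ball x R := by
    intro w hw
    simp only [mem_iUnion] at hw
    obtain ⟨z, hz, hwz⟩ := hw
    rw [mem_ball] at hwz ⊢
    have hxz := hmem z hz
    have hzx : dist z x < (2:ℝ)^(-(j:ℤ)) * r := by rwa [dist_comm] at hxz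
    have htri : dist w x ≤ dist w z + dist z x := dist_triangle _ _ _
    have hRR : (2:ℝ)^(-(j:ℤ)) * r + (2:ℝ)^(-(j:ℤ)) * r = R := by
      rw [hR, show (-(j:ℤ)+1) = (-(j:ℤ)) + 1 by ring, zpow_add₀ (by norm_num : (2:ℝ) ≠ 0)]
      ring
    calc dist w x ≤ dist w z + dist z x := htri
      _ < a + (2:ℝ)^(-(j:ℤ)) * r := by linarith
      _ ≤ (2:ℝ)^(-(j:ℤ)) * r + (2:ℝ)^(-(j:ℤ)) * r := by linarith
      _ = R := hRR
  have hR8a : R ≤ 8 * a := by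
    rw [hR, ha]
    have : (2:ℝ)^(-(j:ℤ)+1) ≤ 8 * (2:ℝ)^(-(k:ℤ)-1) := by
      have h8 : (8:ℝ) = (2:ℝ)^(3:ℤ) := by norm_num
      rw [h8, ← zpow_add₀ (by norm_num : (2:ℝ) ≠ 0)]
      exact two_zpow_le (by omega)
    calc (2:ℝ)^(-(j:ℤ)+1) * r ≤ (8 * (2:ℝ)^(-(k:ℤ)-1)) * r :=
          mul_le_mul_of_nonneg_right this hr.le
      _ = 8 * ((2:ℝ)^(-(k:ℤ)-1) * r) := by ring
  have hRpos : 0 < R := by rw [hR]; positivity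
  have hkey : (s.card : ℝ≥0∞) * (ENNReal.ofReal (a ^ n) * V1 n)
      ≤ (2:ℝ≥0∞) ^ (3*n) * (ENNReal.ofReal (a ^ n) * V1 n) := by
    rw [← hsum, ← hUnion]
    calc volume (⋃ z ∈ s, ball z a) ≤ volume (ball x R) := measure_mono hsub
      _ = ENNReal.ofReal (R ^ n) * V1 n := vol_ball hn x hRpos.le
      _ ≤ ENNReal.ofReal ((8*a) ^ n) * V1 n := by
          have hpow : R ^ n ≤ (8*a) ^ n := pow_le_pow_left₀ hRpos.le hR8a n
          exact mul_le_mul_left (ENNReal.ofReal_le_ofReal hpow) _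
      _ = (2:ℝ≥0∞) ^ (3*n) * (ENNReal.ofReal (a ^ n) * V1 n) := by
          rw [mul_pow, ENNReal.ofReal_mul (by positivity), ← mul_assoc]
          congr 1
          congr 1
          rw [ENNReal.ofReal_pow (by norm_num)]
          norm_num [pow_mul]
  have hc0 : (ENNReal.ofReal (a ^ n) * V1 n) ≠ 0 := by
    apply mul_ne_zero
    · simp only [ne_eq, ENNReal.ofReal_eq_zero, not_le]
      positivity
    · exact (V1_pos n).ne'
  have hctop : (ENNReal.ofReal (a ^ n) * V1 n) ≠ ∞ :=
    ENNReal.mul_ne_top ENNReal.ofReal_ne_top (V1_ne_top n)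
  exact (ENNReal.mul_le_mul_iff_left hc0 hctop).mp hkey

end RieszAux
end Part2
namespace RieszAux
open MeasureTheory Metric Set ENNReal

/-! ### Core definitions -/

noncomputable def rad (r : ℝ) (k : ℕ) : ℝ := (2:ℝ) ^ (-(k:ℤ)) * r

def jj (k : ℕ) : ℕ := k - 1

lemma rad_pos {r : ℝ} (hr : 0 < r) (k : ℕ) : 0 < rad r k := by
  unfold rad; positivity

lemma rad_antitone {r : ℝ} (hr : 0 < r) {k l : ℕ} (hkl : k ≤ l) : rad r l ≤ rad r k :=
  mul_le_mul_of_nonneg_right (two_zpow_le (by omega)) hr.le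

lemma rad_le_r {r : ℝ} (hr : 0 < r) (k : ℕ) : rad r k ≤ r := by
  have : rad r k ≤ rad r 0 := rad_antitone hr (Nat.zero_le k)
  simpa [rad] using this

lemma jj_le (k : ℕ) : jj k ≤ k := Nat.sub_le k 1

lemma le_jj (k : ℕ) : k ≤ jj k + 1 := by unfold jj; omega

lemma jj_mono : Monotone jj := fun a b h => Nat.sub_le_sub_right h 1

noncomputable def Hk {n : ℕ} (h : Eucl n → ℝ≥0∞) (r : ℝ) (k : ℕ) (y : Eucl n) : ℝ≥0∞ :=
  ∫⁻ x in ball y (rad r k), h x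

noncomputable def Avg {n : ℕ} (h : Eucl n → ℝ≥0∞) (r : ℝ) (k : ℕ) (y : Eucl n) : ℝ≥0∞ :=
  Hk h r k y / volume (ball y (rad r k))

noncomputable def Fm {n : ℕ} (h : Eucl n → ℝ≥0∞) (r : ℝ) (x : Eucl n) : ℝ≥0∞ :=
  ⨆ e : ℤ, (volume (ball x ((2:ℝ)^e * r)))⁻¹ * ∫⁻ z in ball x ((2:ℝ)^e * r), h z

def band {n : ℕ} (μ : Measure (Eucl n)) (r : ℝ) : Set (Eucl n) :=
  {x | infDist x (measSupport μ) < r}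

def Tset {n : ℕ} (μ : Measure (Eucl n)) (r t : ℝ) (j : ℕ) (y : Eucl n) : Set (Eucl n) :=
  (ball y ((2:ℝ)^(-(j:ℤ)) * r) \ closedBall y ((2:ℝ)^(-(j:ℤ)-1) * r)) ∩
    {x | (2:ℝ)^(-(j:ℤ)) * r / t < infDist x (measSupport μ) ∧
         infDist x (measSupport μ) < (2:ℝ)^(-(j:ℤ)) * r}

lemma Tset_subset_ball {n : ℕ} (μ : Measure (Eucl n)) (r t : ℝ) (j : ℕ) (y : Eucl n) :
    Tset μ r t j y ⊆ ball y (rad r j) := fun x hx => hx.1.1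

lemma Tset_subset_band {n : ℕ} (μ : Measure (Eucl n)) {r : ℝ} (hr : 0 < r) (t : ℝ) (j : ℕ)
    (y : Eucl n) : Tset μ r t j y ⊆ band μ r := by
  intro x hx
  have h1 : infDist x (measSupport μ) < (2:ℝ)^(-(j:ℤ)) * r := hx.2.2
  have h2 : (2:ℝ)^(-(j:ℤ)) * r ≤ r := rad_le_r hr j
  exact lt_of_lt_of_le h1 h2

lemma measurableSet_Tset {n : ℕ} (μ : Measure (Eucl n)) (r t : ℝ) (j : ℕ) (y : Eucl n) :
    MeasurableSet (Tset μ r t j y) := by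
  apply MeasurableSet.inter
  · exact measurableSet_ball.diff measurableSet_closedBall
  · apply MeasurableSet.inter
    · exact measurableSet_lt measurable_const (Metric.continuous_infDist_pt _).measurable
    · exact measurableSet_lt (Metric.continuous_infDist_pt _).measurable measurable_const

lemma measurableSet_band {n : ℕ} (μ : Measure (Eucl n)) (r : ℝ) :
    MeasurableSet (band μ r) :=
  measurableSet_lt (Metric.continuous_infDist_pt _).measurable measurable_const

/-! ### Measurability -/

lemma measurable_ball_lintegral {n : ℕ} {h : Eucl n → ℝ≥0∞} (hh : Measurable h) (s : ℝ) :
    Measurable fun y : Eucl n => ∫⁻ x in ball y s, h x := by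
  have heq : ∀ y : Eucl n, ∫⁻ x in ball y s, h x = ∫⁻ x, (ball y s).indicator h x := fun y =>
    (lintegral_indicator measurableSet_ball h).symm
  simp_rw [heq]
  apply Measurable.lintegral_prod_right (f := fun (y : Eucl n) (x : Eucl n) => (ball y s).indicator h x)
  have huncurry : Function.uncurry (fun (y : Eucl n) (x : Eucl n) => (ball y s).indicator h x)
      = fun p : Eucl n × Eucl n => if dist p.2 p.1 < s then h p.2 else 0 := by
    funext p
    show (ball p.1 s).indicator h p.2 = _
    by_cases hb : dist p.2 p.1 < s
    · rw [if_pos hb, Set.indicator_of_mem (mem_ball.mpr hb)]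
    · rw [if_neg hb, Set.indicator_of_notMem (fun hmem => hb (mem_ball.mp hmem))]
  rw [huncurry]
  exact Measurable.ite
    (measurableSet_lt ((continuous_dist.comp (continuous_snd.prodMk continuous_fst)).measurable)
      measurable_const)
    (hh.comp measurable_snd) measurable_const

lemma measurable_Hk {n : ℕ} {h : Eucl n → ℝ≥0∞} (hh : Measurable h) (r : ℝ) (k : ℕ) :
    Measurable (Hk h r k) := measurable_ball_lintegral hh _

lemma measurable_Avg {n : ℕ} (hn : 1 ≤ n) {h : Eucl n → ℝ≥0∞} (hh : Measurable h)
    {r : ℝ} (hr : 0 < r) (k : ℕ) : Measurable (Avg h r k) := by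
  unfold Avg
  have heq : ∀ y : Eucl n, volume (ball y (rad r k)) = ENNReal.ofReal ((rad r k)^n) * V1 n :=
    fun y => vol_ball hn y (rad_pos hr k).le
  simp_rw [heq]
  exact (measurable_Hk hh r k).div measurable_const

lemma measurable_Fm {n : ℕ} (hn : 1 ≤ n) {h : Eucl n → ℝ≥0∞} (hh : Measurable h)
    {r : ℝ} (hr : 0 < r) : Measurable (Fm h r) := by
  unfold Fm
  apply Measurable.iSup
  intro e
  have heq : ∀ x : Eucl n, volume (ball x ((2:ℝ)^e*r)) = ENNReal.ofReal (((2:ℝ)^e*r)^n) * V1 n :=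
    fun x => vol_ball hn x (by positivity)
  simp_rw [heq]
  exact (measurable_ball_lintegral hh _).const_mul _

lemma Fm_le_maximalFn {n : ℕ} {h : Eucl n → ℝ≥0∞} {r : ℝ} (hr : 0 < r) (x : Eucl n) :
    Fm h r x ≤ maximalFn h x := by
  refine iSup_le fun e => ?_
  have hpos : (0:ℝ) < (2:ℝ)^e * r := by positivity
  exact le_iSup_of_le ((2:ℝ)^e * r) (le_iSup_of_le hpos le_rfl)

/-! ### Kernel decomposition -/

lemma inner_le {n : ℕ} (hn : 1 ≤ n) {r : ℝ} (hr : 0 < r) {h : Eucl n → ℝ≥0∞}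
    (hh : Measurable h) (y : Eucl n) :
    (∫⁻ x in ball y r, h x / ENNReal.ofReal (dist x y) ^ (n - 1))
      ≤ ∑' k : ℕ, (ENNReal.ofReal (rad r (k+1)) ^ (n-1))⁻¹ * Hk h r k y := by
  classical
  haveI : Nonempty (Fin n) := ⟨⟨0, hn⟩⟩
  haveI : Nontrivial (Eucl n) := inferInstance
  set Ann : ℕ → Set (Eucl n) :=
    fun k => {x | rad r (k+1) ≤ dist x y ∧ dist x y < rad r k} with hAnn
  have hdmeas : Measurable fun x : Eucl n => dist x y :=
    (continuous_id.dist continuous_const).measurable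
  have hAnnMeas : ∀ k, MeasurableSet (Ann k) := fun k =>
    (measurableSet_le measurable_const hdmeas).inter (measurableSet_lt hdmeas measurable_const)
  have hdisj : Pairwise (Function.onFun Disjoint Ann) := by
    intro i j hij
    wlog hlt : i < j generalizing i j
    · exact (this hij.symm (by omega)).symm
    · rw [Function.onFun, Set.disjoint_left]
      intro x hxi hxj
      have h1 : dist x y < rad r j := hxj.2
      have h2 : rad r (i+1) ≤ dist x y := hxi.1
      have h3 : rad r j ≤ rad r (i+1) := rad_antitone hr (by omega)
      linarith
  have hsub : ball y r ⊆ (⋃ k, Ann k) ∪ {y} := by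
    intro x hx
    rcases eq_or_ne x y with rfl | hxy
    · exact Or.inr rfl
    · left
      have hd0 : 0 < dist x y := dist_pos.mpr hxy
      have hdr : dist x y < r := mem_ball.mp hx
      have hex : ∃ m : ℕ, rad r m ≤ dist x y := by
        obtain ⟨m, hm⟩ := exists_pow_lt_of_lt_one (div_pos hd0 hr) (by norm_num : (1:ℝ)/2 < 1)
        refine ⟨m, ?_⟩
        have h2 : ((1:ℝ)/2)^m = (2:ℝ)^(-(m:ℤ)) := by
          rw [one_div, inv_pow, ← zpow_natCast, ← zpow_neg]
        rw [rad, ← h2]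
        calc ((1:ℝ)/2)^m * r ≤ (dist x y / r) * r :=
              mul_le_mul_of_nonneg_right hm.le hr.le
          _ = dist x y := by field_simp
      have hfind : rad r (Nat.find hex) ≤ dist x y := Nat.find_spec hex
      have hm0pos : Nat.find hex ≠ 0 := by
        intro h0
        rw [h0] at hfind
        have hr0 : rad r 0 = r := by simp [rad]
        rw [hr0] at hfind; linarith
      obtain ⟨k, hk⟩ : ∃ k, Nat.find hex = k + 1 := ⟨Nat.find hex - 1, by omega⟩
      refine mem_iUnion.mpr ⟨k, ?_, ?_⟩
      · rw [← hk]; exact hfind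
      · have hmin := Nat.find_min hex (m := k) (by omega)
        push_neg at hmin
        exact hmin
  calc ∫⁻ x in ball y r, h x / ENNReal.ofReal (dist x y) ^ (n - 1)
      ≤ ∫⁻ x in (⋃ k, Ann k) ∪ {y}, h x / ENNReal.ofReal (dist x y) ^ (n-1) :=
        lintegral_mono_set hsub
    _ ≤ (∫⁻ x in (⋃ k, Ann k), h x / ENNReal.ofReal (dist x y) ^ (n-1))
          + ∫⁻ x in ({y} : Set (Eucl n)), h x / ENNReal.ofReal (dist x y) ^ (n-1) :=
        lintegral_union_le _ _ _
    _ = ∫⁻ x in (⋃ k, Ann k), h x / ENNReal.ofReal (dist x y) ^ (n-1) := by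
        rw [setLIntegral_measure_zero _ _ (measure_singleton y), add_zero]
    _ = ∑' k, ∫⁻ x in Ann k, h x / ENNReal.ofReal (dist x y) ^ (n-1) :=
        lintegral_iUnion hAnnMeas hdisj _
    _ ≤ ∑' k : ℕ, (ENNReal.ofReal (rad r (k+1)) ^ (n-1))⁻¹ * Hk h r k y := by
        apply ENNReal.tsum_le_tsum
        intro k
        have hDk0 : (ENNReal.ofReal (rad r (k+1)) ^ (n-1)) ≠ 0 := by
          apply pow_ne_zero
          simp only [ne_eq, ENNReal.ofReal_eq_zero, not_le]
          exact rad_pos hr (k+1)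
        calc ∫⁻ x in Ann k, h x / ENNReal.ofReal (dist x y) ^ (n-1)
            ≤ ∫⁻ x in Ann k, h x / ENNReal.ofReal (rad r (k+1)) ^ (n-1) := by
              apply setLIntegral_mono (hh.div measurable_const)
              intro x hx
              exact ENNReal.div_le_div_left
                (pow_le_pow_left' (ENNReal.ofReal_le_ofReal hx.1) (n-1)) _
          _ = (∫⁻ x in Ann k, h x) / ENNReal.ofReal (rad r (k+1)) ^ (n-1) := by
              simp_rw [div_eq_mul_inv]
              exact lintegral_mul_const' _ _ (ENNReal.inv_ne_top.mpr hDk0)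
          _ ≤ Hk h r k y / ENNReal.ofReal (rad r (k+1)) ^ (n-1) := by
              apply ENNReal.div_le_div_right
              exact lintegral_mono_set (fun x hx => mem_ball.mpr hx.2)
          _ = (ENNReal.ofReal (rad r (k+1)) ^ (n-1))⁻¹ * Hk h r k y := by
              rw [div_eq_mul_inv, mul_comm]

end RieszAux
namespace RieszAux
open MeasureTheory Metric Set ENNReal

/-! ### Transfer: local averages are dominated by `Fm` nearby -/

lemma transfer {n : ℕ} (hn : 1 ≤ n) {r : ℝ} (hr : 0 < r) (h : Eucl n → ℝ≥0∞) (k : ℕ)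
    (z x : Eucl n) (hx : dist x z < rad r (jj k)) :
    Avg h r k z ≤ (2:ℝ≥0∞) ^ (2*n) * Fm h r x := by
  haveI : Nonempty (Fin n) := ⟨⟨0, hn⟩⟩
  set e : ℤ := 1 - (jj k : ℤ) with he
  have hepos : (0:ℝ) < (2:ℝ)^e * r := by positivity
  have hsub : ball z (rad r k) ⊆ ball x ((2:ℝ)^e * r) := by
    intro w hw
    rw [mem_ball] at hw ⊢
    have h1 : rad r k ≤ rad r (jj k) := rad_antitone hr (jj_le k)
    have htri : dist w x ≤ dist w z + dist z x := dist_triangle _ _ _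
    have hzx : dist z x < rad r (jj k) := by rwa [dist_comm] at hx
    have h2e : (2:ℝ)^e * r = rad r (jj k) + rad r (jj k) := by
      rw [he, rad, show (1 - (jj k:ℤ)) = (-(jj k:ℤ)) + 1 by ring,
        zpow_add₀ (by norm_num : (2:ℝ) ≠ 0)]
      ring
    rw [h2e]
    calc dist w x ≤ dist w z + dist z x := htri
      _ < rad r k + rad r (jj k) := by linarith
      _ ≤ rad r (jj k) + rad r (jj k) := by linarith
  have hFm : (volume (ball x ((2:ℝ)^e * r)))⁻¹ * ∫⁻ w in ball x ((2:ℝ)^e * r), h w ≤ Fm h r x :=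
    le_iSup (fun e : ℤ => (volume (ball x ((2:ℝ)^e * r)))⁻¹ * ∫⁻ w in ball x ((2:ℝ)^e * r), h w) e
  have hHle : Hk h r k z ≤ ∫⁻ w in ball x ((2:ℝ)^e * r), h w := lintegral_mono_set hsub
  have hvole : volume (ball x ((2:ℝ)^e * r)) = ENNReal.ofReal (((2:ℝ)^e * r)^n) * V1 n :=
    vol_ball hn x hepos.le
  have hvolk : volume (ball z (rad r k)) = ENNReal.ofReal ((rad r k)^n) * V1 n :=
    vol_ball hn z (rad_pos hr k).le
  have hek : e ≤ 2 - (k:ℤ) := by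
    have hjk : (k:ℤ) - 1 ≤ (jj k : ℤ) := by unfold jj; push_cast; omega
    omega
  have hreal : ((2:ℝ)^e * r)^n ≤ 2^(2*n) * (rad r k)^n := by
    have h1 : (2:ℝ)^e ≤ (2:ℝ)^(2 - (k:ℤ)) := two_zpow_le hek
    have h2 : ((2:ℝ)^e * r)^n ≤ ((2:ℝ)^(2-(k:ℤ)) * r)^n :=
      pow_le_pow_left₀ (by positivity) (mul_le_mul_of_nonneg_right h1 hr.le) n
    have h3 : (2:ℝ)^(2-(k:ℤ)) * r = 4 * rad r k := by
      rw [rad, show (2 - (k:ℤ)) = (-(k:ℤ)) + 2 by ring, zpow_add₀ (by norm_num : (2:ℝ)≠0)]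
      norm_num
      ring
    rw [h3] at h2
    calc ((2:ℝ)^e*r)^n ≤ (4 * rad r k)^n := h2
      _ = 4^n * (rad r k)^n := mul_pow _ _ _
      _ = 2^(2*n) * (rad r k)^n := by rw [show (4:ℝ) = 2^2 by norm_num, ← pow_mul]
  have hvol_ineq : volume (ball x ((2:ℝ)^e*r)) ≤ (2:ℝ≥0∞)^(2*n) * volume (ball z (rad r k)) := by
    rw [hvole, hvolk, ← mul_assoc]
    apply mul_le_mul_left
    calc ENNReal.ofReal (((2:ℝ)^e*r)^n) ≤ ENNReal.ofReal (2^(2*n) * (rad r k)^n) :=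
          ENNReal.ofReal_le_ofReal hreal
      _ = (2:ℝ≥0∞)^(2*n) * ENNReal.ofReal ((rad r k)^n) := by
          rw [ENNReal.ofReal_mul (by positivity)]
          congr 1
          rw [ENNReal.ofReal_pow (by norm_num)]
          norm_num
  have h2n0 : ((2:ℝ≥0∞)^(2*n)) ≠ 0 := pow_ne_zero _ (by norm_num)
  have h2ntop : ((2:ℝ≥0∞)^(2*n)) ≠ ∞ := ENNReal.pow_ne_top (by norm_num)
  have hinv : (volume (ball z (rad r k)))⁻¹
      ≤ (2:ℝ≥0∞)^(2*n) * (volume (ball x ((2:ℝ)^e*r)))⁻¹ := by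
    have hmono := ENNReal.inv_le_inv' hvol_ineq
    rw [ENNReal.mul_inv (Or.inl h2n0) (Or.inl h2ntop)] at hmono
    calc (volume (ball z (rad r k)))⁻¹
        = (2:ℝ≥0∞)^(2*n) * (((2:ℝ≥0∞)^(2*n))⁻¹ * (volume (ball z (rad r k)))⁻¹) := by
          rw [← mul_assoc, ENNReal.mul_inv_cancel h2n0 h2ntop, one_mul]
      _ ≤ (2:ℝ≥0∞)^(2*n) * (volume (ball x ((2:ℝ)^e*r)))⁻¹ := mul_le_mul_right hmono _
  calc Avg h r k z = Hk h r k z * (volume (ball z (rad r k)))⁻¹ := by rw [Avg, div_eq_mul_inv]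
    _ ≤ (∫⁻ w in ball x ((2:ℝ)^e*r), h w) * ((2:ℝ≥0∞)^(2*n) * (volume (ball x ((2:ℝ)^e*r)))⁻¹) :=
        mul_le_mul' hHle hinv
    _ = (2:ℝ≥0∞)^(2*n) * ((volume (ball x ((2:ℝ)^e*r)))⁻¹ * ∫⁻ w in ball x ((2:ℝ)^e*r), h w) := by
        ring
    _ ≤ (2:ℝ≥0∞)^(2*n) * Fm h r x := mul_le_mul_right hFm _

/-! ### Layer cake -/

lemma layercake {α : Type*} [MeasurableSpace α] (ν : Measure α) (F : α → ℝ≥0∞)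
    (hF : Measurable F) (hfin : ν {x | F x = ∞} = 0) :
    ∑' m : ℤ, 2^m * ν {x | (2:ℝ≥0∞)^m ≤ F x} ≤ 2 * ∫⁻ x, F x ∂ν := by
  classical
  set Rng : ℤ → Set α := fun l => {x | (2:ℝ≥0∞)^l ≤ F x ∧ F x < 2^(l+1)} with hRng
  have hRngMeas : ∀ l, MeasurableSet (Rng l) := by
    intro l
    have heq : Rng l = F ⁻¹' (Ico ((2:ℝ≥0∞)^l) (2^(l+1))) := rfl
    rw [heq]
    exact hF measurableSet_Ico
  have hRdisj : Pairwise (Function.onFun Disjoint Rng) := by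
    intro i j hij
    wlog hlt : i < j generalizing i j
    · exact (this hij.symm (by omega)).symm
    · rw [Function.onFun, Set.disjoint_left]
      intro x hxi hxj
      have h1 : F x < 2^(i+1) := hxi.2
      have h2 : (2:ℝ≥0∞)^j ≤ F x := hxj.1
      have h3 : (2:ℝ≥0∞)^(i+1) ≤ 2^j := ENNReal.zpow_le_of_le (by norm_num) (by omega)
      exact absurd (lt_of_le_of_lt (h3.trans h2) h1) (lt_irrefl _)
  have hsubset : ∀ m : ℤ, {x | (2:ℝ≥0∞)^m ≤ F x} ⊆ (⋃ i : ℕ, Rng (m + i)) ∪ {x | F x = ∞} := by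
    intro m x hx
    rcases eq_or_ne (F x) ∞ with hinf | hfin'
    · exact Or.inr hinf
    · left
      have hF0 : F x ≠ 0 := by
        intro h0
        simp only [mem_setOf_eq] at hx
        rw [h0, le_zero_iff] at hx
        exact absurd hx (ENNReal.zpow_pos (by norm_num) (by norm_num) m).ne'
      obtain ⟨l, hl⟩ := ENNReal.exists_mem_Ico_zpow hF0 hfin' (by norm_num : (1:ℝ≥0∞) < 2)
        (by norm_num)
      have hml : m ≤ l := by
        by_contra hml
        push_neg at hml
        have h2 : (2:ℝ≥0∞)^(l+1) ≤ 2^m := ENNReal.zpow_le_of_le (by norm_num) (by omega)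
        exact absurd (lt_of_lt_of_le hl.2 (h2.trans hx)) (lt_irrefl _)
      refine mem_iUnion.mpr ⟨(l - m).toNat, ?_⟩
      have hlm : m + ((l - m).toNat : ℤ) = l := by omega
      rw [hRng]
      simp only [mem_setOf_eq, hlm]
      exact ⟨hl.1, hl.2⟩
  have hcount : ∀ m : ℤ, ν {x | (2:ℝ≥0∞)^m ≤ F x} ≤ ∑' i : ℕ, ν (Rng (m+i)) := by
    intro m
    calc ν {x | (2:ℝ≥0∞)^m ≤ F x} ≤ ν ((⋃ i : ℕ, Rng (m+i)) ∪ {x | F x = ∞}) :=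
          measure_mono (hsubset m)
      _ ≤ ν (⋃ i : ℕ, Rng (m+i)) + ν {x | F x = ∞} := measure_union_le _ _
      _ = ν (⋃ i : ℕ, Rng (m+i)) := by rw [hfin, add_zero]
      _ ≤ ∑' i : ℕ, ν (Rng (m+i)) := measure_iUnion_le _
  calc ∑' m : ℤ, 2^m * ν {x | (2:ℝ≥0∞)^m ≤ F x}
      ≤ ∑' m : ℤ, ∑' i : ℕ, (2:ℝ≥0∞)^m * ν (Rng (m+i)) := by
        apply ENNReal.tsum_le_tsum
        intro m
        rw [ENNReal.tsum_mul_left]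
        exact mul_le_mul_right (hcount m) _
    _ = ∑' i : ℕ, ∑' m : ℤ, (2:ℝ≥0∞)^m * ν (Rng (m+i)) := ENNReal.tsum_comm
    _ = ∑' i : ℕ, (2:ℝ≥0∞)^(-(i:ℤ)) * ∑' l : ℤ, (2:ℝ≥0∞)^l * ν (Rng l) := by
        congr 1
        funext i
        have hterm : ∀ m : ℤ, (2:ℝ≥0∞)^m * ν (Rng (m+i))
            = (2:ℝ≥0∞)^(-(i:ℤ)) * ((2:ℝ≥0∞)^(m+i) * ν (Rng (m+i))) := by
          intro m
          rw [← mul_assoc, ← ENNReal.zpow_add (by norm_num) (by norm_num)]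
          congr 2
          ring
        simp_rw [hterm]
        rw [ENNReal.tsum_mul_left]
        congr 1
        exact ((Equiv.addRight (i:ℤ)).tsum_eq fun l => (2:ℝ≥0∞)^l * ν (Rng l))
    _ = (∑' i : ℕ, (2:ℝ≥0∞)^(-(i:ℤ))) * ∑' l : ℤ, (2:ℝ≥0∞)^l * ν (Rng l) :=
        ENNReal.tsum_mul_right
    _ ≤ 2 * ∫⁻ x, F x ∂ν := by
        have hgeo : (∑' i : ℕ, (2:ℝ≥0∞)^(-(i:ℤ))) = 2 := by
          have hh : ∀ i : ℕ, (2:ℝ≥0∞)^(-(i:ℤ)) = (2⁻¹ : ℝ≥0∞)^i := by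
            intro i
            rw [ENNReal.zpow_neg, zpow_natCast, ← ENNReal.inv_pow]
          simp_rw [hh]
          rw [ENNReal.tsum_geometric, ENNReal.one_sub_inv_two, inv_inv]
        rw [hgeo]
        apply mul_le_mul_right
        calc ∑' l : ℤ, (2:ℝ≥0∞)^l * ν (Rng l) ≤ ∑' l : ℤ, ∫⁻ x in Rng l, F x ∂ν := by
              apply ENNReal.tsum_le_tsum
              intro l
              calc (2:ℝ≥0∞)^l * ν (Rng l) = ∫⁻ _ in Rng l, (2:ℝ≥0∞)^l ∂ν :=
                    (setLIntegral_const _ _).symm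
                _ ≤ ∫⁻ x in Rng l, F x ∂ν := setLIntegral_mono hF (fun x hx => hx.1)
          _ = ∫⁻ x in ⋃ l : ℤ, Rng l, F x ∂ν := (lintegral_iUnion hRngMeas hRdisj F).symm
          _ ≤ ∫⁻ x, F x ∂ν := setLIntegral_le_lintegral _ _

/-! ### Partition of the support by the size of the averages -/

lemma partition_avg {n : ℕ} (μ : Measure (Eucl n)) {h : Eucl n → ℝ≥0∞} {r : ℝ} {k : ℕ}
    (hAvgMeas : Measurable (Avg h r k))
    (hfin : ∀ y ∈ measSupport μ, Avg h r k y ≠ ∞) :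
    ∫⁻ y in measSupport μ, Avg h r k y ∂μ
      ≤ ∑' m : ℤ, 2^(m+1) *
          μ {y | y ∈ measSupport μ ∧ Avg h r k y ∈ Ico ((2:ℝ≥0∞)^m) (2^(m+1))} := by
  classical
  set K := measSupport μ with hK
  have hKmeas : MeasurableSet K := (isClosed_measSupport μ).measurableSet
  set Km : ℤ → Set (Eucl n) :=
    fun m => {y | y ∈ K ∧ Avg h r k y ∈ Ico ((2:ℝ≥0∞)^m) (2^(m+1))} with hKm
  have hKmMeas : ∀ m, MeasurableSet (Km m) := by
    intro m
    have heq : Km m = K ∩ (Avg h r k) ⁻¹' (Ico ((2:ℝ≥0∞)^m) (2^(m+1))) := rfl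
    rw [heq]
    exact hKmeas.inter (hAvgMeas measurableSet_Ico)
  have hKmdisj : Pairwise (Function.onFun Disjoint Km) := by
    intro i j hij
    wlog hlt : i < j generalizing i j
    · exact (this hij.symm (by omega)).symm
    · rw [Function.onFun, Set.disjoint_left]
      intro y hyi hyj
      have h1 : Avg h r k y < 2^(i+1) := hyi.2.2
      have h2 : (2:ℝ≥0∞)^j ≤ Avg h r k y := hyj.2.1
      have h3 : (2:ℝ≥0∞)^(i+1) ≤ 2^j := ENNReal.zpow_le_of_le (by norm_num) (by omega)
      exact absurd (lt_of_le_of_lt (h3.trans h2) h1) (lt_irrefl _)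
  set Z : Set (Eucl n) := K ∩ {y | Avg h r k y = 0} with hZ
  have hcover : K ⊆ Z ∪ ⋃ m : ℤ, Km m := by
    intro y hy
    rcases eq_or_ne (Avg h r k y) 0 with h0 | h0
    · exact Or.inl ⟨hy, h0⟩
    · right
      obtain ⟨m, hm⟩ := ENNReal.exists_mem_Ico_zpow h0 (hfin y hy)
        (by norm_num : (1:ℝ≥0∞) < 2) (by norm_num)
      exact mem_iUnion.mpr ⟨m, hy, hm⟩
  calc ∫⁻ y in K, Avg h r k y ∂μ
      ≤ ∫⁻ y in Z ∪ ⋃ m : ℤ, Km m, Avg h r k y ∂μ := lintegral_mono_set hcover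
    _ ≤ (∫⁻ y in Z, Avg h r k y ∂μ) + ∫⁻ y in ⋃ m : ℤ, Km m, Avg h r k y ∂μ :=
        lintegral_union_le _ _ _
    _ = ∫⁻ y in ⋃ m : ℤ, Km m, Avg h r k y ∂μ := by
        have hZ0 : ∫⁻ y in Z, Avg h r k y ∂μ ≤ 0 := by
          have hmono := setLIntegral_mono (μ := μ) (f := Avg h r k) (g := fun _ => 0)
            measurable_const (s := Z) (fun y hy => le_of_eq hy.2)
          simpa using hmono
        rw [le_zero_iff.mp hZ0, zero_add]
    _ = ∑' m : ℤ, ∫⁻ y in Km m, Avg h r k y ∂μ := lintegral_iUnion hKmMeas hKmdisj _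
    _ ≤ ∑' m : ℤ, 2^(m+1) * μ (Km m) := by
        apply ENNReal.tsum_le_tsum
        intro m
        calc ∫⁻ y in Km m, Avg h r k y ∂μ ≤ ∫⁻ _ in Km m, (2:ℝ≥0∞)^(m+1) ∂μ :=
              setLIntegral_mono measurable_const (fun y hy => hy.2.2.le)
          _ = 2^(m+1) * μ (Km m) := setLIntegral_const _ _

end RieszAux
namespace RieszAux
open MeasureTheory Metric Set ENNReal

lemma tsum_tail_geom {r : ℝ} (hr : 0 < r) (k' : ℕ) :
    ∑' k : ℕ, (if k' ≤ k then ENNReal.ofReal (rad r k) else 0)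
      = 2 * ENNReal.ofReal (rad r k') := by
  set F : ℕ → ℝ≥0∞ := fun k => if k' ≤ k then ENNReal.ofReal (rad r k) else 0 with hF
  show ∑' k : ℕ, F k = 2 * ENNReal.ofReal (rad r k')
  have hshift : ∑' i : ℕ, F (k' + i) = ∑' k : ℕ, F k := by
    apply Function.Injective.tsum_eq (g := fun i : ℕ => k' + i)
      (fun a b hab => by simpa using hab)
    intro x hx
    rcases le_or_gt k' x with hle | hlt
    · exact ⟨x - k', by change k' + (x - k') = x; omega⟩
    · simp only [Function.mem_support, hF] at hx
      rw [if_neg (by omega)] at hx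
      exact absurd rfl hx
  rw [← hshift]
  have hterm : ∀ i : ℕ, F (k' + i)
      = ENNReal.ofReal (rad r k') * (2⁻¹ : ℝ≥0∞)^i := by
    intro i
    show (if k' ≤ k' + i then ENNReal.ofReal (rad r (k' + i)) else 0) = _
    rw [if_pos (by omega)]
    have hradd : rad r (k' + i) = rad r k' * ((1:ℝ)/2)^i := by
      rw [rad, rad]
      have : (2:ℝ)^(-((k'+i : ℕ):ℤ)) = (2:ℝ)^(-(k':ℤ)) * ((1:ℝ)/2)^i := by
        rw [one_div, inv_pow, ← zpow_natCast (2:ℝ) i, ← zpow_neg,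
          ← zpow_add₀ (by norm_num : (2:ℝ) ≠ 0)]
        congr 1
        push_cast
        ring
      rw [this]
      ring
    rw [hradd, ENNReal.ofReal_mul (rad_pos hr k').le]
    congr 1
    rw [ENNReal.ofReal_pow (by norm_num)]
    congr 1
    rw [ENNReal.ofReal_div_of_pos (by norm_num)]
    norm_num
  simp_rw [hterm]
  rw [ENNReal.tsum_mul_left, ENNReal.tsum_geometric, ENNReal.one_sub_inv_two, inv_inv, mul_comm]

/-- The core class estimate: all the mass of the class sets, weighted by their scales,
is controlled by the measure `σ` of the region where `Fm` is large. -/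
lemma class_estimate {n : ℕ} (hn : 1 ≤ n) (μ σ : Measure (Eucl n))
    {r t A : ℝ} (hr : 0 < r) (hA : 0 < A)
    (hyp : ∀ y ∈ measSupport μ, ∀ j : ℕ,
      ENNReal.ofReal (A * (2:ℝ)^(-(j:ℤ)) * r) * μ (ball y ((2:ℝ)^(-(j:ℤ)+1) * r))
        ≤ σ (Tset μ r t j y))
    (h : Eucl n → ℝ≥0∞)
    (Cm : ℕ → Set (Eucl n)) (hCK : ∀ k, Cm k ⊆ measSupport μ)
    (m : ℤ) (hCval : ∀ k, ∀ y ∈ Cm k, (2:ℝ≥0∞)^m ≤ Avg h r k y) :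
    ∑' k : ℕ, ENNReal.ofReal (rad r k) * μ (Cm k)
      ≤ 2^(3*n+1) * (ENNReal.ofReal A)⁻¹ *
        σ (band μ r ∩ {x | (2:ℝ≥0∞)^(m - 2*(n:ℤ)) ≤ Fm h r x}) := by
  classical
  set Em : Set (Eucl n) := band μ r ∩ {x | (2:ℝ≥0∞)^(m - 2*(n:ℤ)) ≤ Fm h r x} with hEm
  set δ : ℕ → ℝ := fun k => (2:ℝ)^(-(jj k : ℤ)+1) * r with hδ
  have hδ_pos : ∀ k, 0 < δ k := fun k => by rw [hδ]; positivity
  have hδ_two : ∀ k, δ k = rad r (jj k) + rad r (jj k) := by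
    intro k
    show (2:ℝ)^(-(jj k : ℤ)+1) * r = rad r (jj k) + rad r (jj k)
    rw [rad, show (-(jj k:ℤ)+1) = (-(jj k:ℤ)) + 1 by ring,
      zpow_add₀ (by norm_num : (2:ℝ) ≠ 0)]
    ring
  have hεδ : ∀ k, rad r k ≤ δ k := by
    intro k
    rw [hδ_two k]
    have h1 : rad r k ≤ rad r (jj k) := rad_antitone hr (jj_le k)
    have h2 : 0 < rad r (jj k) := rad_pos hr _
    linarith
  obtain ⟨sel, hselC, hselcnt, hselsep, hselcover, hselcross⟩ :=
    greedy Cm (fun k => rad r k) δ (fun k => rad_pos hr k) hεδ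
  -- membership facts
  have hzK : ∀ k, ∀ z ∈ sel k, z ∈ measSupport μ := fun k z hz => hCK k (hselC k hz)
  -- each receptor set sits inside `Em`
  have hTsub : ∀ k, ∀ z ∈ sel k, Tset μ r t (jj k) z ⊆ Em := by
    intro k z hz x hx
    constructor
    · exact Tset_subset_band μ hr t (jj k) z hx
    · have hdist : dist x z < rad r (jj k) := mem_ball.mp (Tset_subset_ball μ r t (jj k) z hx)
      have h1 : (2:ℝ≥0∞)^m ≤ (2:ℝ≥0∞)^(2*n) * Fm h r x :=
        le_trans (hCval k z (hselC k hz)) (transfer hn hr h k z x hdist)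
      have hcast : ((2*n : ℕ) : ℤ) = 2*(n:ℤ) := by push_cast; ring
      have h2 := mul_le_mul_right h1 ((2:ℝ≥0∞)^(-(2*(n:ℤ))))
      rw [← mul_assoc] at h2
      have h3 : (2:ℝ≥0∞)^(-(2*(n:ℤ))) * (2:ℝ≥0∞)^(2*n) = 1 := by
        rw [show ((2:ℝ≥0∞)^(2*n) : ℝ≥0∞) = (2:ℝ≥0∞)^((2*n : ℕ) : ℤ) from
          (zpow_natCast 2 (2*n)).symm, hcast,
          ← ENNReal.zpow_add (by norm_num) (by norm_num)]
        norm_num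
      rw [h3, one_mul] at h2
      show (2:ℝ≥0∞)^(m - 2*(n:ℤ)) ≤ Fm h r x
      calc (2:ℝ≥0∞)^(m-2*(n:ℤ)) = (2:ℝ≥0∞)^(-(2*(n:ℤ))) * 2^m := by
            rw [← ENNReal.zpow_add (by norm_num) (by norm_num)]
            congr 1
            ring
        _ ≤ Fm h r x := h2
  -- stage unions
  set U : ℕ → Set (Eucl n) := fun k => ⋃ z ∈ sel k, Tset μ r t (jj k) z with hU
  have hUmeas : ∀ k, MeasurableSet (U k) := fun k =>
    MeasurableSet.biUnion (hselcnt k) (fun z _ => measurableSet_Tset μ r t (jj k) z)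
  have hUsub : ∀ k, U k ⊆ Em := by
    intro k
    apply Set.iUnion₂_subset
    intro z hz
    exact hTsub k z hz
  have hUdisj : Pairwise (Function.onFun Disjoint U) := by
    intro k k' hkk'
    wlog hlt : k < k' generalizing k k'
    · exact (this hkk'.symm (by omega)).symm
    rw [Function.onFun, Set.disjoint_left]
    intro x hx hx'
    simp only [hU, mem_iUnion] at hx hx'
    obtain ⟨z, hz, hxT⟩ := hx
    obtain ⟨z', hz', hxT'⟩ := hx'
    have hd : δ k ≤ dist z z' := hselcross k k' hlt z hz z' hz'
    have h1 : dist x z < rad r (jj k) := mem_ball.mp (Tset_subset_ball μ r t (jj k) z hxT)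
    have h2 : dist x z' < rad r (jj k') := mem_ball.mp (Tset_subset_ball μ r t (jj k') z' hxT')
    have hjjle : rad r (jj k') ≤ rad r (jj k) := rad_antitone hr (jj_mono hlt.le)
    have htri : dist z z' ≤ dist z x + dist x z' := dist_triangle _ _ _
    have hzx : dist z x = dist x z := dist_comm _ _
    rw [hδ_two k] at hd
    linarith
  -- same-stage packing: the sum of the `σ`-masses of the receptors at one stage
  have hstage : ∀ k, ∑' z : (sel k), σ (Tset μ r t (jj k) (z : Eucl n)) ≤ 2^(3*n) * σ (U k) := by
    intro k
    haveI := (hselcnt k).to_subtype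
    have hind : ∀ x : Eucl n,
        (∑' z : (sel k), (Tset μ r t (jj k) (z : Eucl n)).indicator (fun _ => (1:ℝ≥0∞)) x)
          ≤ 2^(3*n) * (U k).indicator (fun _ => (1:ℝ≥0∞)) x := by
      intro x
      by_cases hxU : x ∈ U k
      · rw [Set.indicator_of_mem hxU, mul_one, ENNReal.tsum_eq_iSup_sum]
        apply iSup_le
        intro s
        have hsum : (∑ z ∈ s, (Tset μ r t (jj k) (z : Eucl n)).indicator (fun _ => (1:ℝ≥0∞)) x)
            = ((s.filter (fun z : (sel k) => x ∈ Tset μ r t (jj k) (z : Eucl n))).card : ℝ≥0∞) := by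
          rw [← Finset.sum_boole]
          apply Finset.sum_congr rfl
          intro z _
          rw [Set.indicator_apply]
        rw [hsum]
        set s2 : Finset (Eucl n) :=
          (s.filter (fun z : (sel k) => x ∈ Tset μ r t (jj k) (z : Eucl n))).image
            (fun z : (sel k) => (z : Eucl n)) with hs2
        have hcard : s2.card
            = (s.filter (fun z : (sel k) => x ∈ Tset μ r t (jj k) (z : Eucl n))).card :=
          Finset.card_image_of_injective _ Subtype.val_injective
        have hs2sep : (↑s2 : Set (Eucl n)).Pairwise
            (fun a b => (2:ℝ)^(-(k:ℤ)) * r ≤ dist a b) := by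
          apply (hselsep k).mono
          intro w hw
          simp only [hs2, Finset.coe_image, mem_image] at hw
          obtain ⟨z, _, rfl⟩ := hw
          exact z.2
        have hs2mem : ∀ w ∈ s2, dist x w < (2:ℝ)^(-(jj k:ℤ)) * r := by
          intro w hw
          simp only [hs2, Finset.mem_image, Finset.mem_filter] at hw
          obtain ⟨z, ⟨_, hxT⟩, rfl⟩ := hw
          have hmem := mem_ball.mp (Tset_subset_ball μ r t (jj k) (z : Eucl n) hxT)
          simpa [rad, dist_comm] using hmem
        have := packing hn hr (jj_le k) (le_jj k) x s2 hs2sep hs2mem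
        rw [← hcard]
        exact this
      · have hz0 : ∀ z : (sel k),
            (Tset μ r t (jj k) (z : Eucl n)).indicator (fun _ => (1:ℝ≥0∞)) x = 0 := by
          intro z
          apply Set.indicator_of_notMem
          intro hxT
          exact hxU (mem_biUnion z.2 hxT)
        simp only [hz0, tsum_zero]
        exact zero_le
    calc ∑' z : (sel k), σ (Tset μ r t (jj k) (z : Eucl n))
        = ∑' z : (sel k), ∫⁻ x, (Tset μ r t (jj k) (z : Eucl n)).indicator (fun _ => (1:ℝ≥0∞)) x ∂σ := by
          congr 1
          funext z
          rw [show (fun _ : Eucl n => (1:ℝ≥0∞)) = (1 : Eucl n → ℝ≥0∞) from rfl,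
            lintegral_indicator_one (measurableSet_Tset μ r t (jj k) _)]
      _ = ∫⁻ x, ∑' z : (sel k), (Tset μ r t (jj k) (z : Eucl n)).indicator (fun _ => (1:ℝ≥0∞)) x ∂σ := by
          rw [lintegral_tsum]
          intro z
          exact (measurable_const.indicator (measurableSet_Tset μ r t (jj k) _)).aemeasurable
      _ ≤ ∫⁻ x, 2^(3*n) * (U k).indicator (fun _ => (1:ℝ≥0∞)) x ∂σ := lintegral_mono hind
      _ = 2^(3*n) * σ (U k) := by
          rw [lintegral_const_mul' _ _ (ENNReal.pow_ne_top (by norm_num))]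
          rw [show (fun _ : Eucl n => (1:ℝ≥0∞)) = (1 : Eucl n → ℝ≥0∞) from rfl,
            lintegral_indicator_one (hUmeas k)]
  -- hypothesis step
  have hstep : ∀ k', ∀ z : (sel k'), ENNReal.ofReal (rad r k') * μ (ball (z : Eucl n) (δ k'))
      ≤ (ENNReal.ofReal A)⁻¹ * σ (Tset μ r t (jj k') (z : Eucl n)) := by
    intro k' z
    have hhyp := hyp (z : Eucl n) (hzK k' z z.2) (jj k')
    have hA0 : ENNReal.ofReal A ≠ 0 := by
      simp only [ne_eq, ENNReal.ofReal_eq_zero, not_le]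
      exact hA
    have hAtop : ENNReal.ofReal A ≠ ∞ := ENNReal.ofReal_ne_top
    have hr1 : ENNReal.ofReal (rad r k') ≤ ENNReal.ofReal ((2:ℝ)^(-(jj k':ℤ)) * r) :=
      ENNReal.ofReal_le_ofReal (rad_antitone hr (jj_le k'))
    have hfactor : ENNReal.ofReal ((2:ℝ)^(-(jj k':ℤ)) * r)
        = (ENNReal.ofReal A)⁻¹ * ENNReal.ofReal (A * (2:ℝ)^(-(jj k':ℤ)) * r) := by
      rw [show A * (2:ℝ)^(-(jj k':ℤ)) * r = A * ((2:ℝ)^(-(jj k':ℤ)) * r) by ring,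
        ENNReal.ofReal_mul hA.le, ← mul_assoc, ENNReal.inv_mul_cancel hA0 hAtop, one_mul]
    calc ENNReal.ofReal (rad r k') * μ (ball (z : Eucl n) (δ k'))
        ≤ ENNReal.ofReal ((2:ℝ)^(-(jj k':ℤ)) * r) * μ (ball (z : Eucl n) (δ k')) :=
          mul_le_mul_left hr1 _
      _ = (ENNReal.ofReal A)⁻¹ * (ENNReal.ofReal (A * (2:ℝ)^(-(jj k':ℤ)) * r)
            * μ (ball (z : Eucl n) ((2:ℝ)^(-(jj k':ℤ)+1) * r))) := by
          rw [hfactor, mul_assoc]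
      _ ≤ (ENNReal.ofReal A)⁻¹ * σ (Tset μ r t (jj k') (z : Eucl n)) :=
          mul_le_mul_right hhyp _
  -- coverage bound
  have hcovμ : ∀ k, μ (Cm k) ≤ ∑' k' : ℕ,
      (if k' ≤ k then ∑' z : (sel k'), μ (ball (z : Eucl n) (δ k')) else 0) := by
    intro k
    have hsub : Cm k ⊆ ⋃ k' : ℕ, (if k' ≤ k then ⋃ z ∈ sel k', ball z (δ k') else ∅) := by
      intro y hy
      obtain ⟨k', hk'le, z, hz, hdist⟩ := hselcover k y hy
      refine mem_iUnion.mpr ⟨k', ?_⟩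
      rw [if_pos hk'le]
      exact mem_biUnion hz (mem_ball.mpr hdist)
    calc μ (Cm k) ≤ μ (⋃ k' : ℕ, (if k' ≤ k then ⋃ z ∈ sel k', ball z (δ k') else ∅)) :=
          measure_mono hsub
      _ ≤ ∑' k' : ℕ, μ (if k' ≤ k then ⋃ z ∈ sel k', ball z (δ k') else ∅) :=
          measure_iUnion_le _
      _ ≤ ∑' k' : ℕ, (if k' ≤ k then ∑' z : (sel k'), μ (ball (z : Eucl n) (δ k')) else 0) := by
          apply ENNReal.tsum_le_tsum
          intro k'
          split_ifs with hif
          · exact measure_biUnion_le μ (hselcnt k') _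
          · simp
  -- main computation
  set G : ℕ → ℝ≥0∞ := fun k' => ∑' z : (sel k'), μ (ball (z : Eucl n) (δ k')) with hG
  calc ∑' k : ℕ, ENNReal.ofReal (rad r k) * μ (Cm k)
      ≤ ∑' k : ℕ, ∑' k' : ℕ, (if k' ≤ k then ENNReal.ofReal (rad r k) * G k' else 0) := by
        apply ENNReal.tsum_le_tsum
        intro k
        calc ENNReal.ofReal (rad r k) * μ (Cm k)
            ≤ ENNReal.ofReal (rad r k) * ∑' k' : ℕ, (if k' ≤ k then G k' else 0) := by
              apply mul_le_mul_right
              exact hcovμ k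
          _ = ∑' k' : ℕ, (if k' ≤ k then ENNReal.ofReal (rad r k) * G k' else 0) := by
              rw [← ENNReal.tsum_mul_left]
              congr 1
              funext k'
              rw [mul_ite, mul_zero]
    _ = ∑' k' : ℕ, ∑' k : ℕ, (if k' ≤ k then ENNReal.ofReal (rad r k) * G k' else 0) :=
        ENNReal.tsum_comm
    _ = ∑' k' : ℕ, (2 * ENNReal.ofReal (rad r k')) * G k' := by
        congr 1
        funext k'
        have : ∀ k : ℕ, (if k' ≤ k then ENNReal.ofReal (rad r k) * G k' else 0)
            = (if k' ≤ k then ENNReal.ofReal (rad r k) else 0) * G k' := by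
          intro k
          rw [ite_mul, zero_mul]
        simp_rw [this]
        rw [ENNReal.tsum_mul_right, tsum_tail_geom hr k']
    _ ≤ ∑' k' : ℕ, 2 * ((ENNReal.ofReal A)⁻¹ * ∑' z : (sel k'), σ (Tset μ r t (jj k') (z : Eucl n))) := by
        apply ENNReal.tsum_le_tsum
        intro k'
        rw [mul_assoc]
        apply mul_le_mul_right
        calc ENNReal.ofReal (rad r k') * G k'
            = ∑' z : (sel k'), ENNReal.ofReal (rad r k') * μ (ball (z : Eucl n) (δ k')) := by
              rw [hG, ENNReal.tsum_mul_left]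
          _ ≤ ∑' z : (sel k'), (ENNReal.ofReal A)⁻¹ * σ (Tset μ r t (jj k') (z : Eucl n)) := by
              haveI := (hselcnt k').to_subtype
              exact ENNReal.tsum_le_tsum (fun z => hstep k' z)
          _ = (ENNReal.ofReal A)⁻¹ * ∑' z : (sel k'), σ (Tset μ r t (jj k') (z : Eucl n)) :=
              ENNReal.tsum_mul_left
    _ ≤ ∑' k' : ℕ, 2 * ((ENNReal.ofReal A)⁻¹ * (2^(3*n) * σ (U k'))) := by
        apply ENNReal.tsum_le_tsum
        intro k'
        exact mul_le_mul_right (mul_le_mul_right (hstage k') _) _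
    _ = 2^(3*n+1) * (ENNReal.ofReal A)⁻¹ * ∑' k' : ℕ, σ (U k') := by
        rw [← ENNReal.tsum_mul_left]
        congr 1
        funext k'
        rw [pow_succ]
        ring
    _ ≤ 2^(3*n+1) * (ENNReal.ofReal A)⁻¹ * σ Em := by
        apply mul_le_mul_right
        calc ∑' k' : ℕ, σ (U k') = σ (⋃ k' : ℕ, U k') := (measure_iUnion hUdisj hUmeas).symm
          _ ≤ σ Em := measure_mono (Set.iUnion_subset hUsub)

end RieszAux
namespace RieszAux
open MeasureTheory Metric Set ENNReal

/-- If some local mass of `h` is infinite, then `Fm` is everywhere infinite. -/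
lemma Fm_top_of_Hk_top {n : ℕ} (hn : 1 ≤ n) {r : ℝ} (hr : 0 < r) {h : Eucl n → ℝ≥0∞}
    {k : ℕ} {y : Eucl n} (htop : Hk h r k y = ∞) (x : Eucl n) : Fm h r x = ∞ := by
  obtain ⟨N, hN⟩ := pow_unbounded_of_one_lt ((dist y x + r)/r) (by norm_num : (1:ℝ) < 2)
  have hNr : dist y x + r < (2:ℝ)^(N:ℤ) * r := by
    rw [zpow_natCast]
    calc dist y x + r = ((dist y x + r)/r) * r := by field_simp
      _ < (2:ℝ)^N * r := by
          apply mul_lt_mul_of_pos_right hN hr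
  have hsub : ball y (rad r k) ⊆ ball x ((2:ℝ)^(N:ℤ) * r) := by
    intro w hw
    rw [mem_ball] at hw ⊢
    have h1 : rad r k ≤ r := rad_le_r hr k
    have htri : dist w x ≤ dist w y + dist y x := dist_triangle _ _ _
    linarith
  have hle : (volume (ball x ((2:ℝ)^(N:ℤ) * r)))⁻¹ * ∫⁻ w in ball x ((2:ℝ)^(N:ℤ) * r), h w
      ≤ Fm h r x :=
    le_iSup (fun e : ℤ => (volume (ball x ((2:ℝ)^e * r)))⁻¹ *
      ∫⁻ w in ball x ((2:ℝ)^e * r), h w) (N:ℤ)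
  have hint : (∫⁻ w in ball x ((2:ℝ)^(N:ℤ) * r), h w) = ∞ :=
    top_le_iff.mp (htop ▸ lintegral_mono_set hsub)
  have hvpos : (volume (ball x ((2:ℝ)^(N:ℤ) * r)))⁻¹ ≠ 0 := by
    simp only [ne_eq, ENNReal.inv_eq_zero]
    exact vol_ball_ne_top x _
  rw [hint, ENNReal.mul_top hvpos] at hle
  exact top_le_iff.mp hle

/-- Positivity of `σ` on the band, given the hypothesis and a point in the support. -/
lemma sigma_band_pos {n : ℕ} (μ σ : Measure (Eucl n)) {r t A : ℝ} (hr : 0 < r) (hA : 0 < A)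
    (hyp : ∀ y ∈ measSupport μ, ∀ j : ℕ,
      ENNReal.ofReal (A * (2:ℝ)^(-(j:ℤ)) * r) * μ (ball y ((2:ℝ)^(-(j:ℤ)+1) * r))
        ≤ σ (Tset μ r t j y))
    {y : Eucl n} (hy : y ∈ measSupport μ) : 0 < σ (band μ r) := by
  have h0 := hyp y hy 0
  have hball : 0 < μ (ball y ((2:ℝ)^(-(0:ℕ):ℤ)+1 * r)) := by
    exact hy _ (by positivity)
  have hofr : (ENNReal.ofReal (A * (2:ℝ)^(-((0:ℕ):ℤ)) * r)) ≠ 0 := by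
    simp only [ne_eq, ENNReal.ofReal_eq_zero, not_le]
    positivity
  have hball' : μ (ball y ((2:ℝ)^(-((0:ℕ):ℤ)+1) * r)) ≠ 0 := by
    have : 0 < μ (ball y ((2:ℝ)^(-((0:ℕ):ℤ)+1) * r)) := hy _ (by positivity)
    exact this.ne'
  have hpos : 0 < ENNReal.ofReal (A * (2:ℝ)^(-((0:ℕ):ℤ)) * r) *
      μ (ball y ((2:ℝ)^(-((0:ℕ):ℤ)+1) * r)) :=
    ENNReal.mul_pos hofr hball'
  calc (0:ℝ≥0∞) < _ := hpos
    _ ≤ σ (Tset μ r t 0 y) := h0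
    _ ≤ σ (band μ r) := measure_mono (Tset_subset_band μ hr t 0 y)

end RieszAux
open RieszAux

theorem riesz_potential_maximal_function_estimate
    (n : ℕ) (hn : 2 ≤ n) (A : ℝ) (hA : 0 < A) :
    ∃ C : ℝ, 0 < C ∧
      ∀ (μ σ : Measure (EuclideanSpace ℝ (Fin n))),
        IsFiniteMeasure μ → IsFiniteMeasure σ →
      ∀ (r t : ℝ), 0 < r → 1 ≤ t →
        (∀ y ∈ measSupport μ, ∀ j : ℕ,
          ENNReal.ofReal (A * (2 : ℝ) ^ (-(j : ℤ)) * r) *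
              μ (Metric.ball y ((2 : ℝ) ^ (-(j : ℤ) + 1) * r)) ≤
            σ ((Metric.ball y ((2 : ℝ) ^ (-(j : ℤ)) * r) \
                Metric.closedBall y ((2 : ℝ) ^ (-(j : ℤ) - 1) * r)) ∩
              {x | (2 : ℝ) ^ (-(j : ℤ)) * r / t < Metric.infDist x (measSupport μ) ∧
                   Metric.infDist x (measSupport μ) < (2 : ℝ) ^ (-(j : ℤ)) * r})) →
      ∀ h : EuclideanSpace ℝ (Fin n) → ℝ≥0∞, Measurable h →
        (∫⁻ y, (∫⁻ x in Metric.ball y r, h x / ENNReal.ofReal (dist x y) ^ (n - 1)) ∂μ) ≤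
          ENNReal.ofReal C *
            ∫⁻ x in {x | Metric.infDist x (measSupport μ) < r}, maximalFn h x ∂σ := by
  classical
  have hn1 : 1 ≤ n := by omega
  refine ⟨2^(6*n+2) * (V1 n).toReal / A + 1, ?_, ?_⟩
  · have h1 : 0 ≤ 2^(6*n+2) * (V1 n).toReal / A := by positivity
    linarith
  intro μ σ hμf hσf r t hr ht hyp0 h hh
  haveI := hμf
  haveI := hσf
  set C : ℝ := 2^(6*n+2) * (V1 n).toReal / A + 1 with hCdef
  have hCpos : 0 < C := by
    have h1 : 0 ≤ 2^(6*n+2) * (V1 n).toReal / A := by positivity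
    rw [hCdef]; linarith
  have hyp : ∀ y ∈ measSupport μ, ∀ j : ℕ,
      ENNReal.ofReal (A * (2:ℝ)^(-(j:ℤ)) * r) * μ (ball y ((2:ℝ)^(-(j:ℤ)+1) * r))
        ≤ σ (Tset μ r t j y) := hyp0
  set RHSI := ∫⁻ x in {x | Metric.infDist x (measSupport μ) < r}, maximalFn h x ∂σ with hRHSI
  by_cases htop : RHSI = ∞
  · rw [htop, ENNReal.mul_top (by
      simp only [ne_eq, ENNReal.ofReal_eq_zero, not_le]
      exact hCpos)]
    exact le_top
  -- main case
  have hband_eq : band μ r = {x | Metric.infDist x (measSupport μ) < r} := rfl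
  have hFint_le : (∫⁻ x in band μ r, Fm h r x ∂σ) ≤ RHSI := by
    rw [hRHSI, ← hband_eq]
    exact lintegral_mono fun x => Fm_le_maximalFn hr x
  set K : Set (EuclideanSpace ℝ (Fin n)) := measSupport μ with hK
  have hKmeas : MeasurableSet K := (isClosed_measSupport μ).measurableSet
  have hHkfin : ∀ (k:ℕ), ∀ y ∈ measSupport μ, Hk h r k y ≠ ∞ := by
    intro k y hy hHk
    have hFall : ∀ x, Fm h r x = ∞ := Fm_top_of_Hk_top hn1 hr hHk
    have hσpos : 0 < σ (band μ r) := sigma_band_pos μ σ hr hA hyp hy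
    have hinfty : (∞ : ℝ≥0∞) ≤ RHSI := by
      calc (∞:ℝ≥0∞) = ∞ * σ (band μ r) := (ENNReal.top_mul hσpos.ne').symm
        _ = ∫⁻ _x in band μ r, (∞:ℝ≥0∞) ∂σ := (setLIntegral_const _ _).symm
        _ = ∫⁻ x in band μ r, Fm h r x ∂σ := lintegral_congr fun x => (hFall x).symm
        _ ≤ RHSI := hFint_le
    exact htop (top_le_iff.mp hinfty)
  have hAvgfin : ∀ (k:ℕ), ∀ y ∈ measSupport μ, Avg h r k y ≠ ∞ := by
    intro k y hy
    exact (ENNReal.div_lt_top (hHkfin k y hy) (vol_ball_pos hn1 y (rad_pos hr k)).ne').ne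
  have hSfin : σ (band μ r ∩ {x | Fm h r x = ∞}) = 0 := by
    by_contra hne
    have hle : ∞ * σ (band μ r ∩ {x | Fm h r x = ∞}) ≤ ∫⁻ x in band μ r, Fm h r x ∂σ := by
      calc ∞ * σ (band μ r ∩ {x | Fm h r x = ∞})
          = ∫⁻ _x in band μ r ∩ {x | Fm h r x = ∞}, (∞:ℝ≥0∞) ∂σ := (setLIntegral_const _ _).symm
        _ ≤ ∫⁻ x in band μ r ∩ {x | Fm h r x = ∞}, Fm h r x ∂σ :=
            setLIntegral_mono (measurable_Fm hn1 hh hr) (fun x hx => le_of_eq hx.2.symm)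
        _ ≤ ∫⁻ x in band μ r, Fm h r x ∂σ := lintegral_mono_set inter_subset_left
    rw [ENNReal.top_mul hne] at hle
    exact htop (top_le_iff.mp (hle.trans hFint_le))
  -- layer cake
  have hlayer : ∑' m : ℤ, 2^m * σ (band μ r ∩ {x | (2:ℝ≥0∞)^(m - 2*(n:ℤ)) ≤ Fm h r x})
      ≤ (2:ℝ≥0∞)^(2*n) * (2 * ∫⁻ x in band μ r, Fm h r x ∂σ) := by
    set ν := σ.restrict (band μ r) with hν
    have hν_apply : ∀ S : Set (EuclideanSpace ℝ (Fin n)), ν S = σ (S ∩ band μ r) := fun S =>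
      Measure.restrict_apply' (measurableSet_band μ r)
    have hfin' : ν {x | Fm h r x = ∞} = 0 := by
      rw [hν_apply, inter_comm]
      exact hSfin
    have hlc := layercake ν (Fm h r) (measurable_Fm hn1 hh hr) hfin'
    have hswap : ∀ m : ℤ, σ (band μ r ∩ {x | (2:ℝ≥0∞)^(m-2*(n:ℤ)) ≤ Fm h r x})
        = ν {x | (2:ℝ≥0∞)^(m-2*(n:ℤ)) ≤ Fm h r x} := by
      intro m
      rw [hν_apply, inter_comm]
    calc ∑' m : ℤ, 2^m * σ (band μ r ∩ {x | (2:ℝ≥0∞)^(m - 2*(n:ℤ)) ≤ Fm h r x})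
        = ∑' m : ℤ, (2:ℝ≥0∞)^(2*(n:ℤ)) * ((2:ℝ≥0∞)^(m-2*(n:ℤ))
            * ν {x | (2:ℝ≥0∞)^(m-2*(n:ℤ)) ≤ Fm h r x}) := by
          congr 1
          funext m
          rw [hswap m, ← mul_assoc, ← ENNReal.zpow_add (by norm_num) (by norm_num)]
          congr 2
          ring
      _ = (2:ℝ≥0∞)^(2*(n:ℤ)) * ∑' m : ℤ, ((2:ℝ≥0∞)^(m-2*(n:ℤ))
            * ν {x | (2:ℝ≥0∞)^(m-2*(n:ℤ)) ≤ Fm h r x}) := ENNReal.tsum_mul_left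
      _ = (2:ℝ≥0∞)^(2*(n:ℤ)) * ∑' l : ℤ, ((2:ℝ≥0∞)^l * ν {x | (2:ℝ≥0∞)^l ≤ Fm h r x}) := by
          congr 1
          exact (Equiv.subRight (2*(n:ℤ))).tsum_eq
            (fun l => (2:ℝ≥0∞)^l * ν {x | (2:ℝ≥0∞)^l ≤ Fm h r x})
      _ ≤ (2:ℝ≥0∞)^(2*(n:ℤ)) * (2 * ∫⁻ x, Fm h r x ∂ν) := mul_le_mul_right hlc _
      _ = (2:ℝ≥0∞)^(2*n) * (2 * ∫⁻ x in band μ r, Fm h r x ∂σ) := by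
          have hzp : ((2:ℝ≥0∞)^(2*(n:ℤ)) : ℝ≥0∞) = (2:ℝ≥0∞)^(2*n) := by
            rw [← zpow_natCast (2:ℝ≥0∞) (2*n)]
            congr 1
          rw [hzp]
  -- the classes
  set KM : ℤ → ℕ → Set (EuclideanSpace ℝ (Fin n)) := fun m k =>
    {y | y ∈ measSupport μ ∧ Avg h r k y ∈ Ico ((2:ℝ≥0∞)^m) (2^(m+1))} with hKM
  -- main chain
  have hck : ∀ k : ℕ, ((ENNReal.ofReal (rad r (k+1)) ^ (n-1))⁻¹
      * (ENNReal.ofReal ((rad r k)^n) * V1 n))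
      = (2:ℝ≥0∞)^(n-1) * ENNReal.ofReal (rad r k) * V1 n := by
    intro k
    have hrk : 0 < rad r k := rad_pos hr k
    have hrk1 : 0 < rad r (k+1) := rad_pos hr (k+1)
    have hhalf : rad r (k+1) = rad r k / 2 := by
      rw [rad, rad, show (-((k:ℕ)+1:ℕ):ℤ) = (-(k:ℤ)) + (-1) by push_cast; ring,
        zpow_add₀ (by norm_num : (2:ℝ) ≠ 0)]
      norm_num
      ring
    have hreal : (rad r k)^n / (rad r (k+1))^(n-1) = 2^(n-1) * rad r k := by
      rw [hhalf, div_pow, div_div_eq_mul_div, show n = (n-1)+1 by omega, pow_succ]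
      rw [show (n-1)+1-1 = n-1 by omega]
      field_simp
    rw [← ENNReal.ofReal_pow hrk1.le, ← mul_assoc]
    rw [show ((ENNReal.ofReal ((rad r (k+1))^(n-1)))⁻¹ * ENNReal.ofReal ((rad r k)^n))
        = ENNReal.ofReal ((rad r k)^n) / ENNReal.ofReal ((rad r (k+1))^(n-1)) by
      rw [div_eq_mul_inv, mul_comm]]
    rw [← ENNReal.ofReal_div_of_pos (pow_pos (rad_pos hr (k+1)) (n-1)), hreal,
      ENNReal.ofReal_mul (by positivity), ENNReal.ofReal_pow (by norm_num)]
    norm_num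
  have hmain : (∫⁻ y, (∫⁻ x in Metric.ball y r, h x / ENNReal.ofReal (dist x y) ^ (n - 1)) ∂μ)
      ≤ (2:ℝ≥0∞)^(6*n+2) * (ENNReal.ofReal A)⁻¹ * V1 n
          * ∫⁻ x in band μ r, Fm h r x ∂σ := by
    calc (∫⁻ y, (∫⁻ x in Metric.ball y r, h x / ENNReal.ofReal (dist x y) ^ (n - 1)) ∂μ)
        = ∫⁻ y in K, (∫⁻ x in Metric.ball y r, h x / ENNReal.ofReal (dist x y) ^ (n - 1)) ∂μ := by
          rw [← lintegral_add_compl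
            (fun y => ∫⁻ x in Metric.ball y r, h x / ENNReal.ofReal (dist x y) ^ (n - 1)) hKmeas,
            setLIntegral_measure_zero _ _ (measure_compl_measSupport μ), add_zero]
      _ ≤ ∫⁻ y in K, (∑' k : ℕ, (ENNReal.ofReal (rad r (k+1)) ^ (n-1))⁻¹ * Hk h r k y) ∂μ :=
          lintegral_mono fun y => inner_le hn1 hr hh y
      _ = ∑' k : ℕ, ∫⁻ y in K, (ENNReal.ofReal (rad r (k+1)) ^ (n-1))⁻¹ * Hk h r k y ∂μ := by
          apply lintegral_tsum
          intro k
          exact ((measurable_Hk hh r k).const_mul _).aemeasurable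
      _ = ∑' k : ℕ, (ENNReal.ofReal (rad r (k+1)) ^ (n-1))⁻¹ * ∫⁻ y in K, Hk h r k y ∂μ := by
          congr 1
          funext k
          apply lintegral_const_mul'
          apply ENNReal.inv_ne_top.mpr
          apply pow_ne_zero
          simp only [ne_eq, ENNReal.ofReal_eq_zero, not_le]
          exact rad_pos hr (k+1)
      _ = ∑' k : ℕ, (ENNReal.ofReal (rad r (k+1)) ^ (n-1))⁻¹
            * ((∫⁻ y in K, Avg h r k y ∂μ) * (ENNReal.ofReal ((rad r k)^n) * V1 n)) := by
          congr 1
          funext k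
          congr 1
          have hX0 : (ENNReal.ofReal ((rad r k)^n) * V1 n) ≠ 0 := by
            apply mul_ne_zero
            · simp only [ne_eq, ENNReal.ofReal_eq_zero, not_le]
              exact pow_pos (rad_pos hr k) n
            · exact (V1_pos n).ne'
          have hXtop : (ENNReal.ofReal ((rad r k)^n) * V1 n) ≠ ∞ :=
            ENNReal.mul_ne_top ENNReal.ofReal_ne_top (V1_ne_top n)
          calc ∫⁻ y in K, Hk h r k y ∂μ
              = ∫⁻ y in K, Avg h r k y * (ENNReal.ofReal ((rad r k)^n) * V1 n) ∂μ := by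
                apply lintegral_congr
                intro y
                rw [Avg, vol_ball hn1 y (rad_pos hr k).le]
                exact (ENNReal.div_mul_cancel hX0 hXtop).symm
            _ = (∫⁻ y in K, Avg h r k y ∂μ) * (ENNReal.ofReal ((rad r k)^n) * V1 n) :=
                lintegral_mul_const' _ _ hXtop
      _ = ∑' k : ℕ, ((2:ℝ≥0∞)^(n-1) * ENNReal.ofReal (rad r k) * V1 n)
            * ∫⁻ y in K, Avg h r k y ∂μ := by
          congr 1
          funext k
          rw [← hck k]
          ring
      _ ≤ ∑' k : ℕ, ((2:ℝ≥0∞)^(n-1) * V1 n)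
            * ∑' m : ℤ, ENNReal.ofReal (rad r k) * (2^(m+1) * μ (KM m k)) := by
          apply ENNReal.tsum_le_tsum
          intro k
          have hpart := partition_avg μ (measurable_Avg hn1 hh hr k) (hAvgfin k)
          calc ((2:ℝ≥0∞)^(n-1) * ENNReal.ofReal (rad r k) * V1 n) * ∫⁻ y in K, Avg h r k y ∂μ
              ≤ ((2:ℝ≥0∞)^(n-1) * ENNReal.ofReal (rad r k) * V1 n)
                  * ∑' m : ℤ, 2^(m+1) * μ (KM m k) := mul_le_mul_right hpart _
            _ = ((2:ℝ≥0∞)^(n-1) * V1 n)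
                  * ∑' m : ℤ, ENNReal.ofReal (rad r k) * (2^(m+1) * μ (KM m k)) := by
                rw [ENNReal.tsum_mul_left (a := ENNReal.ofReal (rad r k)), ← mul_assoc]
                ring_nf
      _ = ((2:ℝ≥0∞)^(n-1) * V1 n) * ∑' m : ℤ, (2^(m+1)
            * ∑' k : ℕ, ENNReal.ofReal (rad r k) * μ (KM m k)) := by
          rw [ENNReal.tsum_mul_left]
          congr 1
          rw [ENNReal.tsum_comm]
          congr 1
          funext m
          have hco : ∀ k : ℕ, ENNReal.ofReal (rad r k) * (2^(m+1) * μ (KM m k))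
              = 2^(m+1) * (ENNReal.ofReal (rad r k) * μ (KM m k)) := fun k => by ring
          simp_rw [hco]
          rw [ENNReal.tsum_mul_left]
      _ ≤ ((2:ℝ≥0∞)^(n-1) * V1 n) * ∑' m : ℤ, (2^(m+1)
            * (2^(3*n+1) * (ENNReal.ofReal A)⁻¹ *
              σ (band μ r ∩ {x | (2:ℝ≥0∞)^(m - 2*(n:ℤ)) ≤ Fm h r x}))) := by
          apply mul_le_mul_right
          apply ENNReal.tsum_le_tsum
          intro m
          apply mul_le_mul_right
          exact class_estimate hn1 μ σ hr hA hyp h (fun k => KM m k)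
            (fun k y hy => hy.1) m (fun k y hy => hy.2.1)
      _ = ((2:ℝ≥0∞)^(n-1) * V1 n) * (2 * 2^(3*n+1) * (ENNReal.ofReal A)⁻¹
            * ∑' m : ℤ, 2^m * σ (band μ r ∩ {x | (2:ℝ≥0∞)^(m - 2*(n:ℤ)) ≤ Fm h r x})) := by
          congr 1
          rw [← ENNReal.tsum_mul_left]
          congr 1
          funext m
          rw [show ((2:ℝ≥0∞)^(m+1) : ℝ≥0∞) = 2 * 2^m by
            rw [ENNReal.zpow_add (by norm_num) (by norm_num) m 1, zpow_one]
            ring]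
          ring
      _ ≤ ((2:ℝ≥0∞)^(n-1) * V1 n) * (2 * 2^(3*n+1) * (ENNReal.ofReal A)⁻¹
            * ((2:ℝ≥0∞)^(2*n) * (2 * ∫⁻ x in band μ r, Fm h r x ∂σ))) := by
          apply mul_le_mul_right
          apply mul_le_mul_right
          exact hlayer
      _ = (2:ℝ≥0∞)^(6*n+2) * (ENNReal.ofReal A)⁻¹ * V1 n
            * ∫⁻ x in band μ r, Fm h r x ∂σ := by
          rw [show (6*n+2) = (n-1) + (3*n+1) + (2*n) + 2 by omega]
          rw [pow_add, pow_add, pow_add]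
          ring
  -- conclude
  have hCconv : (2:ℝ≥0∞)^(6*n+2) * (ENNReal.ofReal A)⁻¹ * V1 n ≤ ENNReal.ofReal C := by
    have h1 : ENNReal.ofReal (2^(6*n+2) * (V1 n).toReal / A)
        = (2:ℝ≥0∞)^(6*n+2) * (ENNReal.ofReal A)⁻¹ * V1 n := by
      rw [ENNReal.ofReal_div_of_pos hA, div_eq_mul_inv,
        ENNReal.ofReal_mul (by positivity), ENNReal.ofReal_pow (by norm_num),
        ENNReal.ofReal_toReal (V1_ne_top n)]
      norm_num
      ring
    rw [← h1, hCdef]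
    apply ENNReal.ofReal_le_ofReal
    linarith
  calc (∫⁻ y, (∫⁻ x in Metric.ball y r, h x / ENNReal.ofReal (dist x y) ^ (n - 1)) ∂μ)
      ≤ (2:ℝ≥0∞)^(6*n+2) * (ENNReal.ofReal A)⁻¹ * V1 n
          * ∫⁻ x in band μ r, Fm h r x ∂σ := hmain
    _ ≤ ENNReal.ofReal C * RHSI := mul_le_mul' hCconv (hFint_le)
end

section
/- (Fuglede's lemma, measure form.) Let 1 ≤ p < ∞ and let f and f_j (j ∈ ℕ) be Borel functions on ℝⁿ such that ∫ |f_j − f|^p dλⁿ → 0 as j → ∞. Then there exist a subsequence (f_{j_k}) and a Borel function g : ℝⁿ → [0,∞] with ∫ g^p dλⁿ < ∞ such that for every finite Borel measure μ on ℝⁿ with ∫ g dμ < ∞, one has ∫ |f_{j_k} − f| dμ → 0 as k → ∞. -/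
open MeasureTheory Filter ENNReal

/-- **Fuglede's lemma, measure form.** Let `1 ≤ p < ∞` and let `f, f_j` be
Borel functions on `ℝⁿ` with `∫ |f_j − f|^p dλⁿ → 0`. Then there are a subsequence
`(f_{j_k})` and a Borel function `g : ℝⁿ → [0,∞]` with `∫ g^p dλⁿ < ∞` such that for every
finite Borel measure `μ` on `ℝⁿ` with `∫ g dμ < ∞` one has `∫ |f_{j_k} − f| dμ → 0`. -/
theorem fuglede_lemma
    (n : ℕ) (p : ℝ) (hp : 1 ≤ p)
    (f : EuclideanSpace ℝ (Fin n) → ℝ) (F : ℕ → EuclideanSpace ℝ (Fin n) → ℝ)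
    (hf : Measurable f) (hF : ∀ j, Measurable (F j))
    (hconv : Tendsto (fun j => ∫⁻ x, ENNReal.ofReal |F j x - f x| ^ p) atTop (nhds 0)) :
    ∃ φ : ℕ → ℕ, StrictMono φ ∧
      ∃ g : EuclideanSpace ℝ (Fin n) → ℝ≥0∞, Measurable g ∧ (∫⁻ x, g x ^ p) < ∞ ∧
        ∀ μ : Measure (EuclideanSpace ℝ (Fin n)), IsFiniteMeasure μ →
          (∫⁻ x, g x ∂μ) < ∞ →
          Tendsto (fun k => ∫⁻ x, ENNReal.ofReal |F (φ k) x - f x| ∂μ) atTop (nhds 0) := by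
  have hp0 : (0:ℝ) < p := lt_of_lt_of_le one_pos hp
  have hp0' : p ≠ 0 := ne_of_gt hp0
  -- the errors
  set h : ℕ → EuclideanSpace ℝ (Fin n) → ℝ≥0∞ :=
    fun j x => ENNReal.ofReal |F j x - f x| with hh
  have hmeas : ∀ j, Measurable (h j) := fun j =>
    (((hF j).sub hf).abs).ennreal_ofReal
  -- target bounds
  set ε : ℕ → ℝ≥0∞ := fun k => (2:ℝ≥0∞)⁻¹ ^ k * ((2:ℝ≥0∞)⁻¹ ^ k) ^ p with hε
  have hεpos : ∀ k, 0 < ε k := by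
    intro k
    have h2 : (0:ℝ≥0∞) < (2:ℝ≥0∞)⁻¹ ^ k := ENNReal.pow_pos (by norm_num) k
    have h2t : (2:ℝ≥0∞)⁻¹ ^ k ≠ ⊤ := ENNReal.pow_ne_top (by norm_num)
    exact ENNReal.mul_pos h2.ne' (ENNReal.rpow_pos h2 h2t).ne'
  -- extract subsequence
  have hev : ∀ k, ∀ᶠ j in atTop, (∫⁻ x, h j x ^ p) ≤ ε k := fun k =>
    (hconv.eventually (gt_mem_nhds (hεpos k))).mono fun j hj => le_of_lt hj
  obtain ⟨φ, hφ, hφa⟩ := Filter.extraction_forall_of_eventually hev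
  refine ⟨φ, hφ, ?_⟩
  -- define g
  set s : EuclideanSpace ℝ (Fin n) → ℝ≥0∞ :=
    fun x => ∑' k, ((2:ℝ≥0∞) ^ k * h (φ k) x) ^ p with hs
  have hsmeas : Measurable s := by
    apply Measurable.ennreal_tsum
    intro k
    exact ((measurable_const.mul (hmeas (φ k)))).pow_const p
  set g : EuclideanSpace ℝ (Fin n) → ℝ≥0∞ := fun x => s x ^ (1/p) with hg
  have hgmeas : Measurable g := hsmeas.pow_const _
  have hgp : ∀ x, g x ^ p = s x := by
    intro x
    rw [hg, ← ENNReal.rpow_mul, one_div, inv_mul_cancel₀ hp0', ENNReal.rpow_one]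
  have key : ∀ k x, (2:ℝ≥0∞) ^ k * h (φ k) x ≤ g x := by
    intro k x
    have h1 : ((2:ℝ≥0∞) ^ k * h (φ k) x) ^ p ≤ s x := ENNReal.le_tsum k
    have h2 := ENNReal.rpow_le_rpow h1 (le_of_lt (one_div_pos.mpr hp0))
    rwa [← ENNReal.rpow_mul, mul_one_div, div_self hp0', ENNReal.rpow_one] at h2
  have hcancel : ∀ k : ℕ, ((2:ℝ≥0∞) ^ k) ^ p * ((2:ℝ≥0∞)⁻¹ ^ k) ^ p = 1 := by
    intro k
    rw [← ENNReal.mul_rpow_of_nonneg _ _ (le_of_lt hp0), ← mul_pow,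
      ENNReal.mul_inv_cancel (by norm_num) (by norm_num), one_pow, ENNReal.one_rpow]
  have hint : (∫⁻ x, g x ^ p) < ∞ := by
    simp only [hgp, hs]
    rw [lintegral_tsum (fun k =>
      ((((hmeas (φ k)).const_mul _)).pow_const p).aemeasurable)]
    have hbd : ∀ k : ℕ, (∫⁻ x, ((2:ℝ≥0∞) ^ k * h (φ k) x) ^ p)
        ≤ (2:ℝ≥0∞)⁻¹ ^ k := by
      intro k
      calc (∫⁻ x, ((2:ℝ≥0∞) ^ k * h (φ k) x) ^ p)
          = ((2:ℝ≥0∞) ^ k) ^ p * ∫⁻ x, h (φ k) x ^ p := by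
            simp_rw [ENNReal.mul_rpow_of_nonneg _ _ (le_of_lt hp0)]
            rw [lintegral_const_mul _ ((hmeas (φ k)).pow_const p)]
        _ ≤ ((2:ℝ≥0∞) ^ k) ^ p * ε k := by
            exact mul_le_mul_right (hφa k) _
        _ = (2:ℝ≥0∞)⁻¹ ^ k := by
            simp only [hε]
            rw [mul_comm ((2:ℝ≥0∞)⁻¹ ^ k) _, ← mul_assoc, hcancel, one_mul]
    calc (∑' k, ∫⁻ x, ((2:ℝ≥0∞) ^ k * h (φ k) x) ^ p)
        ≤ ∑' k : ℕ, (2:ℝ≥0∞)⁻¹ ^ k := ENNReal.tsum_le_tsum hbd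
      _ < ∞ := by
          rw [ENNReal.tsum_geometric]
          exact ENNReal.inv_lt_top.mpr (tsub_pos_of_lt (by
            rw [ENNReal.inv_lt_one]; norm_num))
  refine ⟨g, hgmeas, hint, ?_⟩
  intro μ _ hgμ
  have hub : ∀ k, (∫⁻ x, h (φ k) x ∂μ) ≤ (2:ℝ≥0∞)⁻¹ ^ k * ∫⁻ x, g x ∂μ := by
    intro k
    rw [← lintegral_const_mul _ hgmeas]
    apply lintegral_mono
    intro x
    have := key k x
    calc h (φ k) x = (2:ℝ≥0∞)⁻¹ ^ k * ((2:ℝ≥0∞) ^ k * h (φ k) x) := by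
          rw [← mul_assoc, ← mul_pow, ENNReal.inv_mul_cancel (by norm_num) (by norm_num),
            one_pow, one_mul]
      _ ≤ (2:ℝ≥0∞)⁻¹ ^ k * g x := mul_le_mul_right this _
  have hlim : Tendsto (fun k : ℕ => (2:ℝ≥0∞)⁻¹ ^ k * ∫⁻ x, g x ∂μ) atTop (nhds 0) := by
    have h1 : Tendsto (fun k : ℕ => (2:ℝ≥0∞)⁻¹ ^ k) atTop (nhds 0) :=
      ENNReal.tendsto_pow_atTop_nhds_zero_of_lt_one (by simp [ENNReal.inv_lt_one])
    have := ENNReal.Tendsto.mul_const h1 (Or.inr hgμ.ne)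
    simpa using this
  exact tendsto_of_tendsto_of_tendsto_of_le_of_le tendsto_const_nhds hlim
    (fun k => zero_le) hub
end

section
/- Let n ≥ 1, let ν : ℝⁿ → [0,∞] be a Borel function, and let u : ℝⁿ → ℝ satisfy |u(b) − u(a)| ≤ |b − a| ∫_0^1 ν(a + t(b − a)) dt for all a, b ∈ ℝⁿ (i.e. ν is an upper gradient of u along straight line segments). Then there exists a constant C depending only on n such that |u(b) − u(a)| ≤ C |b − a| (Mν(a) + Mν(b)) for all a, b ∈ ℝⁿ. -/
open MeasureTheory Metric Set ENNReal

variable {n : ℕ}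

lemma aux_max (ν : EuclideanSpace ℝ (Fin n) → ℝ≥0∞) (a : EuclideanSpace ℝ (Fin n))
    {ρ : ℝ} (hρ : 0 < ρ) :
    ∫⁻ y in ball a ρ, ν y ≤ maximalFn ν a * volume (ball a ρ) := by
  have h0 : volume (ball a ρ) ≠ 0 := (measure_ball_pos volume a hρ).ne'
  have ht : volume (ball a ρ) ≠ ⊤ := measure_ball_lt_top.ne
  have h : (volume (ball a ρ))⁻¹ * ∫⁻ y in ball a ρ, ν y ≤ maximalFn ν a := by
    refine le_iSup₂ (f := fun (ρ : ℝ) (_ : 0 < ρ) =>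
      (volume (ball a ρ))⁻¹ * ∫⁻ y in ball a ρ, ν y) ρ hρ
  calc ∫⁻ y in ball a ρ, ν y
      = volume (ball a ρ) * ((volume (ball a ρ))⁻¹ * ∫⁻ y in ball a ρ, ν y) := by
        rw [← mul_assoc, ENNReal.mul_inv_cancel h0 ht, one_mul]
    _ ≤ volume (ball a ρ) * maximalFn ν a := mul_le_mul_right h _
    _ = maximalFn ν a * volume (ball a ρ) := mul_comm _ _

lemma aux_cov (hn : 1 ≤ n) (ν : EuclideanSpace ℝ (Fin n) → ℝ≥0∞) (hν : Measurable ν)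
    (a m : EuclideanSpace ℝ (Fin n)) {t : ℝ} (s : ℝ) (ht : 0 < t) :
    ∫⁻ y in ball m s, ν (a + t • (y - a)) =
      (ENNReal.ofReal (t ^ n))⁻¹ * ∫⁻ z in ball (a + t • (m - a)) (t * s), ν z := by
  set T : EuclideanSpace ℝ (Fin n) → EuclideanSpace ℝ (Fin n) := fun y => a + t • (y - a) with hT
  have hTm : Measurable T := by fun_prop
  have hmap : Measure.map T volume = (ENNReal.ofReal (t ^ n))⁻¹ • volume := by
    have hTc : T = (fun z => (a - t • a) + z) ∘ (fun y : EuclideanSpace ℝ (Fin n) => t • y) := by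
      funext y; simp only [hT, Function.comp_apply, smul_sub]; abel
    rw [hTc, ← Measure.map_map (measurable_const_add _) (measurable_const_smul t),
      Measure.map_addHaar_smul volume ht.ne', Measure.map_smul,
      Measure.IsAddLeftInvariant.map_add_left_eq_self (μ := volume) (a - t • a), finrank_euclideanSpace_fin]
    congr 1
    rw [abs_inv, abs_of_nonneg (pow_nonneg ht.le n),
      ENNReal.ofReal_inv_of_pos (pow_pos ht n)]
  have hpre : T ⁻¹' ball (T m) (t * s) = ball m s := by
    ext y
    simp only [mem_preimage, mem_ball, hT]
    have : dist (a + t • (y - a)) (a + t • (m - a)) = t * dist y m := by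
      rw [dist_eq_norm]
      have : a + t • (y - a) - (a + t • (m - a)) = t • (y - m) := by
        simp only [smul_sub]; abel
      rw [this, norm_smul, Real.norm_eq_abs, abs_of_pos ht, dist_eq_norm]
    rw [this, mul_lt_mul_iff_right₀ ht]
  have hTmval : T m = a + t • (m - a) := rfl
  calc ∫⁻ y in ball m s, ν (T y)
      = ∫⁻ z, ν z ∂((volume.restrict (ball m s)).map T) := (lintegral_map hν hTm).symm
    _ = ∫⁻ z, ν z ∂((Measure.map T volume).restrict (ball (T m) (t * s))) := by
        rw [Measure.restrict_map hTm measurableSet_ball, hpre]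
    _ = (ENNReal.ofReal (t ^ n))⁻¹ * ∫⁻ z in ball (a + t • (m - a)) (t * s), ν z := by
        rw [hTmval, hmap, Measure.restrict_smul, lintegral_smul_measure, smul_eq_mul]

lemma aux_key (hn : 1 ≤ n) (ν : EuclideanSpace ℝ (Fin n) → ℝ≥0∞) (hν : Measurable ν)
    (a m : EuclideanSpace ℝ (Fin n)) {s : ℝ} (hs : 0 < s) :
    ∫⁻ y in ball m s, ∫⁻ t in Icc (0:ℝ) 1, ν (a + t • (y - a)) ≤
      maximalFn ν a * volume (ball a (dist a m + s)) := by
  set d : ℝ := dist a m with hd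
  have hds : 0 < d + s := by positivity
  have hmeas2 : Measurable (Function.uncurry fun (y : EuclideanSpace ℝ (Fin n)) (t : ℝ) =>
      ν (a + t • (y - a))) := by
    apply hν.comp
    fun_prop
  have hswap : ∫⁻ y in ball m s, ∫⁻ t in Icc (0:ℝ) 1, ν (a + t • (y - a)) =
      ∫⁻ t in Icc (0:ℝ) 1, ∫⁻ y in ball m s, ν (a + t • (y - a)) :=
    lintegral_lintegral_swap hmeas2.aemeasurable
  rw [hswap, ← setLIntegral_congr (Ioc_ae_eq_Icc (μ := volume) (a := (0:ℝ)) (b := 1))]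
  set K := maximalFn ν a * volume (ball a (d + s)) with hK
  have hbound : ∀ t ∈ Ioc (0:ℝ) 1,
      ∫⁻ y in ball m s, ν (a + t • (y - a)) ≤ K := by
    intro t ht
    have ht0 : 0 < t := ht.1
    have hc0 : ENNReal.ofReal (t ^ n) ≠ 0 := by
      simp [ENNReal.ofReal_eq_zero, not_le, pow_pos ht0]
    have hct : ENNReal.ofReal (t ^ n) ≠ ⊤ := ENNReal.ofReal_ne_top
    rw [aux_cov hn ν hν a m s ht0]
    have hsub : ball (a + t • (m - a)) (t * s) ⊆ ball a (t * (d + s)) := by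
      intro z hz
      rw [mem_ball] at hz ⊢
      have hcd : dist (a + t • (m - a)) a = t * d := by
        rw [dist_eq_norm, add_sub_cancel_left, norm_smul, Real.norm_eq_abs,
          abs_of_pos ht0, hd, dist_comm, dist_eq_norm]
      calc dist z a ≤ dist z (a + t • (m - a)) + dist (a + t • (m - a)) a :=
            dist_triangle _ _ _
        _ < t * s + t * d := by rw [hcd]; exact add_lt_add_left hz _
        _ = t * (d + s) := by ring
    have h1 : ∫⁻ z in ball (a + t • (m - a)) (t * s), ν z ≤
        maximalFn ν a * volume (ball a (t * (d + s))) :=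
      le_trans (lintegral_mono_set hsub) (aux_max ν a (by positivity))
    have h2 : volume (ball a (t * (d + s))) =
        ENNReal.ofReal (t ^ n) * volume (ball a (d + s)) := by
      rw [Measure.addHaar_ball_mul_of_pos volume a ht0, finrank_euclideanSpace_fin,
        Measure.addHaar_ball_center volume a]
    calc (ENNReal.ofReal (t ^ n))⁻¹ * ∫⁻ z in ball (a + t • (m - a)) (t * s), ν z
        ≤ (ENNReal.ofReal (t ^ n))⁻¹ *
            (maximalFn ν a * (ENNReal.ofReal (t ^ n) * volume (ball a (d + s)))) := by
          rw [← h2]; exact mul_le_mul_right h1 _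
      _ = K := by
          rw [hK, mul_left_comm, ← mul_assoc (ENNReal.ofReal (t ^ n))⁻¹,
            ENNReal.inv_mul_cancel hc0 hct, one_mul]
  calc ∫⁻ t in Ioc (0:ℝ) 1, ∫⁻ y in ball m s, ν (a + t • (y - a))
      ≤ ∫⁻ _ in Ioc (0:ℝ) 1, K := setLIntegral_mono measurable_const hbound
    _ = K * volume (Ioc (0:ℝ) 1) := setLIntegral_const _ _
    _ = K := by rw [Real.volume_Ioc]; norm_num

/-- Let `n ≥ 1`, let `ν : ℝⁿ → [0,∞]` be Borel and `u : ℝⁿ → ℝ` satisfy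
`|u(b) − u(a)| ≤ |b − a| ∫_0^1 ν(a + t(b − a)) dt` for all `a, b` (upper gradient along
segments). Then there is `C = C(n)` with
`|u(b) − u(a)| ≤ C |b − a| (Mν(a) + Mν(b))` for all `a, b` (trivially true when the
right-hand side is infinite, which is automatic in `[0,∞]`). -/
theorem upper_gradient_maximal_function_estimate
    (n : ℕ) (hn : 1 ≤ n) :
    ∃ C : ℝ, 0 < C ∧
      ∀ (ν : EuclideanSpace ℝ (Fin n) → ℝ≥0∞), Measurable ν →
      ∀ u : EuclideanSpace ℝ (Fin n) → ℝ,
        (∀ a b : EuclideanSpace ℝ (Fin n),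
          ENNReal.ofReal |u b - u a| ≤
            ENNReal.ofReal (dist a b) * ∫⁻ t in Set.Icc (0 : ℝ) 1, ν (a + t • (b - a))) →
        ∀ a b : EuclideanSpace ℝ (Fin n),
          ENNReal.ofReal |u b - u a| ≤
            ENNReal.ofReal (C * dist a b) * (maximalFn ν a + maximalFn ν b) := by
  refine ⟨2 ^ n, by positivity, ?_⟩
  intro ν hν u hupg a b
  by_cases hab : a = b
  · subst hab; simp
  have hr : (0:ℝ) < dist a b := dist_pos.mpr hab
  set r : ℝ := dist a b with hrdef
  set m : EuclideanSpace ℝ (Fin n) := midpoint ℝ a b with hm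
  set s : ℝ := r / 2 with hsdef
  have hs : 0 < s := by positivity
  have hma : dist a m + s = r := by
    rw [hm, dist_comm, dist_midpoint_left]
    simp [hsdef, hrdef]; ring
  have hmb : dist b m + s = r := by
    rw [hm, dist_comm, dist_midpoint_right]
    simp [hsdef, hrdef]; rw [dist_comm]; ring
  set B : Set (EuclideanSpace ℝ (Fin n)) := ball m s with hB
  set Ma := maximalFn ν a
  set Mb := maximalFn ν b
  set L := ENNReal.ofReal |u b - u a| with hL
  set Ia : EuclideanSpace ℝ (Fin n) → ℝ≥0∞ := fun y =>
    ENNReal.ofReal (dist a y) * ∫⁻ t in Icc (0:ℝ) 1, ν (a + t • (y - a)) with hIa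
  set Ib : EuclideanSpace ℝ (Fin n) → ℝ≥0∞ := fun y =>
    ENNReal.ofReal (dist b y) * ∫⁻ t in Icc (0:ℝ) 1, ν (b + t • (y - b)) with hIb
  have hinner : ∀ c : EuclideanSpace ℝ (Fin n),
      Measurable fun y : EuclideanSpace ℝ (Fin n) =>
        ∫⁻ t in Icc (0:ℝ) 1, ν (c + t • (y - c)) := by
    intro c
    apply Measurable.lintegral_prod_right (f := fun y t => ν (c + t • (y - c)))
    apply hν.comp
    fun_prop
  have hIam : Measurable Ia :=
    ((continuous_const.dist continuous_id).measurable.ennreal_ofReal).mul (hinner a)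
  have hIbm : Measurable Ib :=
    ((continuous_const.dist continuous_id).measurable.ennreal_ofReal).mul (hinner b)
  have hpt : ∀ y, L ≤ Ia y + Ib y := by
    intro y
    have h1 := hupg a y
    have h2 := hupg b y
    rw [abs_sub_comm] at h2
    calc L ≤ ENNReal.ofReal (|u y - u a| + |u b - u y|) := by
          apply ENNReal.ofReal_le_ofReal
          have := abs_sub_le (u b) (u y) (u a)
          linarith [abs_sub_comm (u b) (u y) ▸ this]
      _ = ENNReal.ofReal |u y - u a| + ENNReal.ofReal |u b - u y| :=
          ENNReal.ofReal_add (abs_nonneg _) (abs_nonneg _)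
      _ ≤ Ia y + Ib y := add_le_add h1 h2
  have hvol0 : volume B ≠ 0 := (measure_ball_pos volume m hs).ne'
  have hvolt : volume B ≠ ⊤ := measure_ball_lt_top.ne
  have hscale : ∀ c : EuclideanSpace ℝ (Fin n),
      volume (ball c r) = ENNReal.ofReal (2 ^ n) * volume B := by
    intro c
    rw [hB, Measure.addHaar_ball_of_pos volume c hr,
      Measure.addHaar_ball_of_pos volume m hs, finrank_euclideanSpace_fin,
      ← mul_assoc, ← ENNReal.ofReal_mul (by positivity)]
    congr 2
    rw [hsdef, div_pow]
    field_simp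
  have key : L * volume B ≤ (ENNReal.ofReal (2 ^ n * r) * (Ma + Mb)) * volume B := by
    calc L * volume B = ∫⁻ _ in B, L := (setLIntegral_const _ _).symm
      _ ≤ ∫⁻ y in B, (Ia y + Ib y) :=
          setLIntegral_mono (hIam.add hIbm) (fun y _ => hpt y)
      _ = (∫⁻ y in B, Ia y) + ∫⁻ y in B, Ib y := lintegral_add_left hIam _
      _ ≤ (ENNReal.ofReal r * (Ma * volume (ball a r))) +
            (ENNReal.ofReal r * (Mb * volume (ball b r))) := by
          gcongr ?_ + ?_
          · calc ∫⁻ y in B, Ia y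
                ≤ ∫⁻ y in B, ENNReal.ofReal r * ∫⁻ t in Icc (0:ℝ) 1, ν (a + t • (y - a)) := by
                  refine setLIntegral_mono (measurable_const.mul (hinner a)) (fun y hy => ?_)
                  refine mul_le_mul_left (ENNReal.ofReal_le_ofReal ?_) _
                  have : dist a y ≤ dist a m + dist m y := dist_triangle _ _ _
                  have h2 : dist m y < s := mem_ball'.mp hy
                  linarith [hma]
              _ = ENNReal.ofReal r * ∫⁻ y in B, ∫⁻ t in Icc (0:ℝ) 1, ν (a + t • (y - a)) :=
                  lintegral_const_mul _ (hinner a)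
              _ ≤ ENNReal.ofReal r * (Ma * volume (ball a r)) := by
                  refine mul_le_mul_right ?_ _
                  have := aux_key hn ν hν a m hs
                  rwa [hma] at this
          · calc ∫⁻ y in B, Ib y
                ≤ ∫⁻ y in B, ENNReal.ofReal r * ∫⁻ t in Icc (0:ℝ) 1, ν (b + t • (y - b)) := by
                  refine setLIntegral_mono (measurable_const.mul (hinner b)) (fun y hy => ?_)
                  refine mul_le_mul_left (ENNReal.ofReal_le_ofReal ?_) _
                  have : dist b y ≤ dist b m + dist m y := dist_triangle _ _ _
                  have h2 : dist m y < s := mem_ball'.mp hy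
                  linarith [hmb]
              _ = ENNReal.ofReal r * ∫⁻ y in B, ∫⁻ t in Icc (0:ℝ) 1, ν (b + t • (y - b)) :=
                  lintegral_const_mul _ (hinner b)
              _ ≤ ENNReal.ofReal r * (Mb * volume (ball b r)) := by
                  refine mul_le_mul_right ?_ _
                  have := aux_key hn ν hν b m hs
                  rwa [hmb] at this
      _ = (ENNReal.ofReal (2 ^ n * r) * (Ma + Mb)) * volume B := by
          rw [hscale a, hscale b, ENNReal.ofReal_mul (by positivity : (0:ℝ) ≤ 2 ^ n)]
          ring
  have := (ENNReal.mul_le_mul_iff_left hvol0 hvolt).mp key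
  exact this
end
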